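/- arXiv:1503.08444 — 8 statements merged into one kernel-verified Lean document; each statement's English description precedes it below -/
import Mathlib

section
/- If G →v (a_1, ..., a_s) and a_i ≥ 3 for some index i, then G →v (a_1, ..., a_{i-1}, 2, a_i - 1, a_{i+1}, ..., a_s), i.e. one can split the parameter a_i into 2 and a_i - 1. -/
open SimpleGraph

lemma aux_len (a : List ℕ) (x y : ℕ) (i : ℕ) (hia : i < a.length) :
    (a.take i ++ [x, y] ++ a.drop (i + 1)).length = a.length + 1 := by
  simp; omega

lemma aux_lt (a : List ℕ) (x y : ℕ) (i : ℕ) (hia : i < a.length) (k : ℕ) (hk : k < i)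
    (h' : k < (a.take i ++ [x, y] ++ a.drop (i + 1)).length) :
    (a.take i ++ [x, y] ++ a.drop (i + 1))[k] = a[k]'(by omega) := by
  rw [List.getElem_append_left (by simp; omega), List.getElem_append_left (by simp; omega),
    List.getElem_take]

lemma aux_i (a : List ℕ) (x y : ℕ) (i : ℕ) (hia : i < a.length)
    (h' : i < (a.take i ++ [x, y] ++ a.drop (i + 1)).length) :
    (a.take i ++ [x, y] ++ a.drop (i + 1))[i] = x := by
  rw [List.getElem_append_left (by simp; omega), List.getElem_append_right (by simp)]
  simp [Nat.min_eq_left hia.le]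

lemma aux_i1 (a : List ℕ) (x y : ℕ) (i : ℕ) (hia : i < a.length)
    (h' : i + 1 < (a.take i ++ [x, y] ++ a.drop (i + 1)).length) :
    (a.take i ++ [x, y] ++ a.drop (i + 1))[i + 1] = y := by
  rw [List.getElem_append_left (by simp; omega), List.getElem_append_right (by simp)]
  simp [Nat.min_eq_left hia.le]

lemma aux_gt (a : List ℕ) (x y : ℕ) (i : ℕ) (hia : i < a.length) (k : ℕ)
    (hk1 : i + 2 ≤ k) (hk2 : k < a.length + 1)
    (h' : k < (a.take i ++ [x, y] ++ a.drop (i + 1)).length) :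
    (a.take i ++ [x, y] ++ a.drop (i + 1))[k] = a[k - 1]'(by omega) := by
  rw [List.getElem_append_right (by simp; omega), List.getElem_drop]
  congr 1
  simp
  omega

/-- `VArrows G a` : for every coloring of the vertices of `G` with `a.length` colors,
some color class `i` contains a clique of size `a.get i`. -/
def VArrows {V : Type} [Fintype V] (G : SimpleGraph V) (a : List ℕ) : Prop :=
  ∀ c : V → Fin a.length, ∃ i : Fin a.length, ∃ S : Finset V,
    (∀ v ∈ S, c v = i) ∧ G.IsNClique (a.get i) S

theorem split_three {V : Type} [Fintype V] (G : SimpleGraph V) (a : List ℕ)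
    (ha : ∀ x ∈ a, 0 < x) (i : Fin a.length) (hi : 3 ≤ a.get i)
    (h : VArrows G a) :
    VArrows G (a.take i ++ [2, a.get i - 1] ++ a.drop (i + 1)) := by
  classical
  intro c'
  have hia : (i : ℕ) < a.length := i.isLt
  have hlen : (a.take i ++ [2, a.get i - 1] ++ a.drop (i + 1)).length = a.length + 1 :=
    aux_len a _ _ i hia
  let m : Fin (a.take i ++ [2, a.get i - 1] ++ a.drop (i + 1)).length → Fin a.length := fun k =>
    ⟨if (k : ℕ) ≤ (i : ℕ) then (k : ℕ) else (k : ℕ) - 1, by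
      have := k.isLt; split <;> omega⟩
  obtain ⟨j, S, hcol, hclq⟩ := h (fun v => m (c' v))
  have hmval : ∀ v ∈ S,
      (if ((c' v) : ℕ) ≤ (i : ℕ) then ((c' v) : ℕ) else ((c' v) : ℕ) - 1) = (j : ℕ) := by
    intro v hv
    exact congrArg Fin.val (hcol v hv)
  rcases lt_trichotomy (j : ℕ) (i : ℕ) with hlt | heq | hgt
  · refine ⟨⟨(j : ℕ), by omega⟩, S, ?_, ?_⟩
    · intro v hv
      have := hmval v hv
      apply Fin.ext
      simp only
      split at this <;> omega
    · simp only [List.get_eq_getElem]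
      rw [aux_lt a _ _ i hia (j : ℕ) hlt]
      convert hclq using 2
      simp
  · -- j = i : split the clique
    have hji : j = i := Fin.ext heq
    subst hji
    have hcard : S.card = a.get j := hclq.card_eq
    have hSval : ∀ v ∈ S, ((c' v) : ℕ) = (j : ℕ) ∨ ((c' v) : ℕ) = (j : ℕ) + 1 := by
      intro v hv
      have := hmval v hv
      split at this <;> omega
    set S1 := S.filter (fun v => ((c' v) : ℕ) = (j : ℕ)) with hS1
    set S2 := S.filter (fun v => ¬ ((c' v) : ℕ) = (j : ℕ)) with hS2
    have hsum : S1.card + S2.card = S.card :=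
      Finset.card_filter_add_card_filter_not _
    by_cases h2 : 2 ≤ S1.card
    · obtain ⟨T, hTsub, hTcard⟩ := Finset.exists_subset_card_eq h2
      refine ⟨⟨(j : ℕ), by omega⟩, T, ?_, ?_⟩
      · intro v hv
        have := hTsub hv
        rw [hS1, Finset.mem_filter] at this
        exact Fin.ext this.2
      · constructor
        · exact hclq.isClique.subset (hTsub.trans (Finset.filter_subset _ _))
        · rw [hTcard]
          simp only [List.get_eq_getElem]
          rw [aux_i a _ _ j hia]
    · have h2' : a.get j - 1 ≤ S2.card := by omega
      obtain ⟨T, hTsub, hTcard⟩ := Finset.exists_subset_card_eq h2'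
      refine ⟨⟨(j : ℕ) + 1, by omega⟩, T, ?_, ?_⟩
      · intro v hv
        have hmem := hTsub hv
        rw [hS2, Finset.mem_filter] at hmem
        apply Fin.ext
        simp only
        rcases hSval v hmem.1 with h' | h'
        · exact absurd h' hmem.2
        · exact h'
      · constructor
        · exact hclq.isClique.subset (hTsub.trans (Finset.filter_subset _ _))
        · rw [hTcard]
          simp only [List.get_eq_getElem]
          rw [aux_i1 a _ _ j hia]
  · refine ⟨⟨(j : ℕ) + 1, by omega⟩, S, ?_, ?_⟩
    · intro v hv
      have := hmval v hv
      apply Fin.ext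
      simp only
      split at this <;> omega
    · simp only [List.get_eq_getElem]
      rw [aux_gt a _ _ i hia ((j : ℕ) + 1) (by omega) (by omega)]
      convert hclq using 2
      simp
end

section
/- If G →v (a_1, ..., a_s) and k is a positive integer with a_i ≥ k, then G →v (a_1, ..., a_{i-1}, k, a_i - k + 1, a_{i+1}, ..., a_s). -/
open SimpleGraph

private lemma lenL (a : List ℕ) (i : ℕ) (hi : i < a.length) (x y : ℕ) :
    (a.take i ++ [x, y] ++ a.drop (i+1)).length = a.length + 1 := by
  simp [List.length_take, List.length_drop]; omega

private lemma getA (a : List ℕ) (i j : ℕ) (hj : j < i) (hi : i < a.length) (x y : ℕ)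
    (hjl : j < (a.take i ++ [x, y] ++ a.drop (i+1)).length) :
    (a.take i ++ [x, y] ++ a.drop (i+1))[j] = a[j]'(by omega) := by
  simp [List.getElem_append, List.length_take]
  rw [dif_pos ⟨hj, by omega⟩]

private lemma getK (a : List ℕ) (i : ℕ) (hi : i < a.length) (x y : ℕ)
    (hjl : i < (a.take i ++ [x, y] ++ a.drop (i+1)).length) :
    (a.take i ++ [x, y] ++ a.drop (i+1))[i] = x := by
  simp [List.getElem_append, List.length_take]
  have h0 : i - i ⊓ a.length = 0 := by omega
  simp [h0]

private lemma getX (a : List ℕ) (i : ℕ) (hi : i < a.length) (x y : ℕ)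
    (hjl : i+1 < (a.take i ++ [x, y] ++ a.drop (i+1)).length) :
    (a.take i ++ [x, y] ++ a.drop (i+1))[i+1] = y := by
  simp [List.getElem_append, List.length_take]
  have h0 : i + 1 - i ⊓ a.length = 1 := by omega
  simp [h0]

private lemma getD (a : List ℕ) (i j : ℕ) (hi : i < a.length) (hj : i + 2 ≤ j)
    (hj2 : j < a.length + 1) (x y : ℕ)
    (hjl : j < (a.take i ++ [x, y] ++ a.drop (i+1)).length) :
    (a.take i ++ [x, y] ++ a.drop (i+1))[j] = a[j-1]'(by omega) := by
  simp [List.getElem_append, List.length_take]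
  rw [dif_neg (by omega)]
  have h0 : j - i ⊓ a.length = (j-i-2)+2 := by omega
  simp [h0, List.getElem_drop]
  congr 1
  omega

theorem split_k {V : Type} [Fintype V] (G : SimpleGraph V) (a : List ℕ) (k : ℕ)
    (ha : ∀ x ∈ a, 0 < x) (hk : 0 < k) (i : Fin a.length) (hik : k ≤ a.get i)
    (h : VArrows G a) :
    VArrows G (a.take i ++ [k, a.get i - k + 1] ++ a.drop (i + 1)) := by
  classical
  intro c
  have hiv : (i : ℕ) < a.length := i.isLt
  have hlen : (a.take (i:ℕ) ++ [k, a.get i - k + 1] ++ a.drop ((i:ℕ) + 1)).length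
      = a.length + 1 := lenL a i hiv _ _
  let f : Fin (a.take (i:ℕ) ++ [k, a.get i - k + 1] ++ a.drop ((i:ℕ) + 1)).length
      → Fin a.length := fun j =>
    if (j : ℕ) ≤ (i:ℕ) + 1 then ⟨min j i, by omega⟩
    else ⟨(j:ℕ) - 1, by have := j.isLt; omega⟩
  obtain ⟨i0, S, hcol, hclique⟩ := h (fun v => f (c v))
  by_cases hi0 : (i0 : ℕ) = (i : ℕ)
  · have hSi : ∀ v ∈ S, (c v : ℕ) = (i:ℕ) ∨ (c v : ℕ) = (i:ℕ) + 1 := by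
      intro v hv
      have hval : ((f (c v)) : ℕ) = (i0 : ℕ) := by rw [hcol v hv]
      simp only [f] at hval
      split at hval
      · simp at hval; omega
      · simp only [Fin.val_mk] at hval; omega
    have hcard : S.card = a.get i := by
      rw [hclique.card_eq]
      congr 1
      exact Fin.ext hi0
    set Ji : Fin (a.take (i:ℕ) ++ [k, a.get i - k + 1] ++ a.drop ((i:ℕ) + 1)).length
      := ⟨(i:ℕ), by omega⟩ with hJi
    set S1 := S.filter (fun v => c v = Ji) with hS1
    set S2 := S.filter (fun v => ¬ c v = Ji) with hS2
    have hsum : S1.card + S2.card = a.get i := by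
      rw [hS1, hS2, Finset.card_filter_add_card_filter_not, hcard]
    by_cases hc1 : k ≤ S1.card
    · obtain ⟨T, hTsub, hTcard⟩ := Finset.exists_subset_card_eq hc1
      refine ⟨Ji, T, ?_, ?_, ?_⟩
      · intro v hv
        exact (Finset.mem_filter.mp (hTsub hv)).2
      · exact hclique.isClique.subset (hTsub.trans (Finset.filter_subset _ _))
      · show T.card = _
        rw [List.get_eq_getElem, hJi]
        rw [getK a (i:ℕ) hiv _ _ (by omega)]
        exact hTcard
    · have hc2 : a.get i - k + 1 ≤ S2.card := by omega
      obtain ⟨T, hTsub, hTcard⟩ := Finset.exists_subset_card_eq hc2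
      refine ⟨⟨(i:ℕ)+1, by omega⟩, T, ?_, ?_, ?_⟩
      · intro v hv
        have hvS := Finset.mem_filter.mp (hTsub hv)
        rcases hSi v hvS.1 with h1 | h1
        · exact absurd (Fin.ext h1 : c v = Ji) hvS.2
        · exact Fin.ext h1
      · exact hclique.isClique.subset (hTsub.trans (Finset.filter_subset _ _))
      · show T.card = _
        rw [List.get_eq_getElem]
        rw [getX a (i:ℕ) hiv _ _ (by omega)]
        exact hTcard
  · have hi0lt : (i0 : ℕ) < a.length := i0.isLt
    by_cases hlt : (i0:ℕ) < (i:ℕ)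
    · refine ⟨⟨(i0:ℕ), by omega⟩, S, ?_, ?_, ?_⟩
      · intro v hv
        have hval : ((f (c v)) : ℕ) = (i0 : ℕ) := by rw [hcol v hv]
        simp only [f] at hval
        apply Fin.ext
        split at hval
        · simp at hval; simp; omega
        · simp only [Fin.val_mk] at hval; simp; omega
      · exact hclique.isClique
      · rw [hclique.card_eq, List.get_eq_getElem, List.get_eq_getElem]
        rw [getA a (i:ℕ) (i0:ℕ) hlt hiv _ _ (by omega)]
    · refine ⟨⟨(i0:ℕ)+1, by omega⟩, S, ?_, ?_, ?_⟩
      · intro v hv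
        have hval : ((f (c v)) : ℕ) = (i0 : ℕ) := by rw [hcol v hv]
        simp only [f] at hval
        apply Fin.ext
        split at hval
        · simp at hval; simp; omega
        · simp only [Fin.val_mk] at hval; simp; omega
      · exact hclique.isClique
      · rw [hclique.card_eq, List.get_eq_getElem, List.get_eq_getElem]
        rw [getD a (i:ℕ) ((i0:ℕ)+1) hiv (by omega) (by omega) _ _ (by omega)]
        simp
end

section
/- If G →v (a_1, ..., a_s) and t is a positive integer, then K_t + G →v (2, 2, ..., 2, a_1, ..., a_s) with t twos, where K_t + G is the join of a complete graph on t vertices with G. -/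
open SimpleGraph

/-- The join of two graphs: all cross edges are present. -/
def joinG {V W : Type} (G : SimpleGraph V) (H : SimpleGraph W) : SimpleGraph (V ⊕ W) where
  Adj x y := match x, y with
    | .inl a, .inl b => G.Adj a b
    | .inr a, .inr b => H.Adj a b
    | .inl _, .inr _ => True
    | .inr _, .inl _ => True
  symm := by refine ⟨?_⟩; rintro (a|a) (b|b) h
             · exact h.symm
             · trivial
             · trivial
             · exact h.symm
  loopless := by refine ⟨?_⟩; rintro (a|a) h
                 · exact G.irrefl h
                 · exact H.irrefl h

lemma isNClique_pair' {W : Type} [DecidableEq W] (H : SimpleGraph W) {x y : W} (h : H.Adj x y) :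
    H.IsNClique 2 {x, y} := by
  have : H.IsNClique 1 {y} := by simp
  have := this.insert (a := x) (by simpa using h)
  simpa using this

theorem join_t {V : Type} [Fintype V] (G : SimpleGraph V) (a : List ℕ) (t : ℕ)
    (ha : ∀ x ∈ a, 0 < x) (ht : 0 < t) (h : VArrows G a) :
    VArrows (joinG (⊤ : SimpleGraph (Fin t)) G) (List.replicate t 2 ++ a) := by
  classical
  intro c
  have hL : (List.replicate t 2 ++ a).length = t + a.length := by simp
  by_cases hA : ∃ i : Fin (List.replicate t 2 ++ a).length, i.val < t ∧
      ∃ x y : Fin t ⊕ V, x ≠ y ∧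
        (joinG (⊤ : SimpleGraph (Fin t)) G).Adj x y ∧ c x = i ∧ c y = i
  · obtain ⟨i, hit, x, y, hxy, hadj, hcx, hcy⟩ := hA
    refine ⟨i, {x, y}, ?_, ?_⟩
    · intro v hv
      rcases Finset.mem_insert.1 hv with rfl | hv
      · exact hcx
      · rw [Finset.mem_singleton.1 hv]; exact hcy
    · have hget : (List.replicate t 2 ++ a).get i = 2 := by
        rw [List.get_eq_getElem, List.getElem_append_left (by simpa using hit),
          List.getElem_replicate]
      rw [hget]
      exact isNClique_pair' _ hadj
  -- Case B
  have hind : ∀ x y : Fin t ⊕ V, x ≠ y →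
      (joinG (⊤ : SimpleGraph (Fin t)) G).Adj x y → c x = c y → ¬ (c x).val < t := by
    intro x y hne hadj hcc hlt
    exact hA ⟨c x, hlt, x, y, hne, hadj, rfl, hcc.symm⟩
  set A : Finset (Fin t) :=
    Finset.univ.filter (fun u => (c (Sum.inl u)).val < t) with hAdef
  let f : Fin t → Fin t := fun u =>
    if h : (c (Sum.inl u)).val < t then ⟨(c (Sum.inl u)).val, h⟩ else u
  have hfA : ∀ u ∈ A, (f u).val = (c (Sum.inl u)).val := by
    intro u hu
    have : (c (Sum.inl u)).val < t := by simpa [hAdef] using hu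
    simp [f, this]
  have hfinj : Set.InjOn f A := by
    intro u hu u' hu' heq
    by_contra hne
    have hadj : (joinG (⊤ : SimpleGraph (Fin t)) G).Adj (Sum.inl u) (Sum.inl u') := by
      show (⊤ : SimpleGraph (Fin t)).Adj u u'
      simpa using hne
    have hcc : c (Sum.inl u) = c (Sum.inl u') := by
      apply Fin.ext
      rw [← hfA u hu, ← hfA u' hu', heq]
    have hlt : (c (Sum.inl u)).val < t := by simpa [hAdef] using hu
    exact hind _ _ (by simp [hne]) hadj hcc hlt
  set P : Finset (Fin t) := A.image f with hPdef
  have hcardP : P.card = A.card := Finset.card_image_of_injOn hfinj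
  have hcards : Pᶜ.card = Aᶜ.card := by
    rw [Finset.card_compl, Finset.card_compl, hcardP]
  let φ : (Pᶜ : Finset (Fin t)) ≃ (Aᶜ : Finset (Fin t)) := Finset.equivOfCardEq hcards
  have hPc : ∀ (v : V) (hv : (c (Sum.inr v)).val < t),
      (⟨(c (Sum.inr v)).val, hv⟩ : Fin t) ∈ Pᶜ := by
    intro v hv
    rw [Finset.mem_compl]
    intro hmem
    obtain ⟨u, hu, hfu⟩ := Finset.mem_image.1 hmem
    have hcc : c (Sum.inl u) = c (Sum.inr v) := by
      apply Fin.ext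
      rw [← hfA u hu, hfu]
    have hlt : (c (Sum.inl u)).val < t := by simpa [hAdef] using hu
    exact hind _ _ (by simp) (by trivial) hcc hlt
  let pick : V → Fin t ⊕ V := fun v =>
    if hv : (c (Sum.inr v)).val < t then
      Sum.inl ((φ ⟨⟨(c (Sum.inr v)).val, hv⟩, hPc v hv⟩ : (Aᶜ : Finset (Fin t))) : Fin t)
    else Sum.inr v
  have hbig : ∀ v : V, t ≤ (c (pick v)).val := by
    intro v
    by_cases hv : (c (Sum.inr v)).val < t
    · simp only [pick, dif_pos hv]
      have hmem : ((φ ⟨⟨(c (Sum.inr v)).val, hv⟩, hPc v hv⟩ : (Aᶜ : Finset (Fin t))) : Fin t)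
          ∈ Aᶜ := (φ ⟨⟨(c (Sum.inr v)).val, hv⟩, hPc v hv⟩).2
      have hnot : ¬ ((c (Sum.inl ((φ ⟨⟨(c (Sum.inr v)).val, hv⟩, hPc v hv⟩ :
          (Aᶜ : Finset (Fin t))) : Fin t))).val < t) := by
        intro hlt
        exact Finset.mem_compl.1 hmem (Finset.mem_filter.2 ⟨Finset.mem_univ _, hlt⟩)
      omega
    · simpa [pick, hv] using Nat.le_of_not_lt hv
  have hub : ∀ v : V, (c (pick v)).val - t < a.length := by
    intro v
    have h1 := (c (pick v)).isLt
    have := hbig v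
    omega
  let c' : V → Fin a.length := fun v => ⟨(c (pick v)).val - t, hub v⟩
  obtain ⟨k, S, hmono, hclique⟩ := h c'
  have hcol : ∀ v ∈ S, (c (pick v)).val = t + k.val := by
    intro v hv
    have := hmono v hv
    have h2 : (c (pick v)).val - t = k.val := congrArg Fin.val this
    have := hbig v
    omega
  have hpickinj : Set.InjOn pick S := by
    intro v hv v' hv' heq
    by_contra hne
    have hadjG : G.Adj v v' := hclique.1 hv hv' hne
    by_cases h1 : (c (Sum.inr v)).val < t <;> by_cases h2 : (c (Sum.inr v')).val < t
    · simp only [pick, dif_pos h1, dif_pos h2, Sum.inl.injEq] at heq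
      have heq2 : (φ ⟨⟨(c (Sum.inr v)).val, h1⟩, hPc v h1⟩)
          = (φ ⟨⟨(c (Sum.inr v')).val, h2⟩, hPc v' h2⟩) := Subtype.ext heq
      have h3 : (⟨(c (Sum.inr v)).val, h1⟩ : Fin t) = ⟨(c (Sum.inr v')).val, h2⟩ :=
        Subtype.ext_iff.1 (φ.injective heq2)
      have hvals : (c (Sum.inr v)).val = (c (Sum.inr v')).val := by simpa using h3
      have hcc : c (Sum.inr v) = c (Sum.inr v') := Fin.ext hvals
      exact hind _ _ (by simp [hne]) (by exact hadjG) hcc h1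
    · simp [pick, dif_pos h1, dif_neg h2] at heq
    · simp [pick, dif_neg h1, dif_pos h2] at heq
    · simp only [pick, dif_neg h1, dif_neg h2, Sum.inr.injEq] at heq
      exact hne heq
  refine ⟨⟨t + k.val, by omega⟩, S.image pick, ?_, ?_, ?_⟩
  · intro x hx
    obtain ⟨v, hv, rfl⟩ := Finset.mem_image.1 hx
    exact Fin.ext (by simpa using hcol v hv)
  · -- clique
    intro x hx y hy hne
    obtain ⟨v, hv, rfl⟩ := Finset.mem_image.1 (Finset.mem_coe.1 hx)
    obtain ⟨v', hv', rfl⟩ := Finset.mem_image.1 (Finset.mem_coe.1 hy)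
    have hvv' : v ≠ v' := fun h => hne (by rw [h])
    have hadjG : G.Adj v v' := hclique.1 hv hv' hvv'
    by_cases h1 : (c (Sum.inr v)).val < t <;> by_cases h2 : (c (Sum.inr v')).val < t
    · simp only [pick, dif_pos h1, dif_pos h2]
      show (⊤ : SimpleGraph (Fin t)).Adj _ _
      simp only [top_adj]
      intro heq
      apply hne
      simp only [pick, dif_pos h1, dif_pos h2]
      rw [heq]
    · simp only [pick, dif_pos h1, dif_neg h2]; trivial
    · simp only [pick, dif_neg h1, dif_pos h2]; trivial
    · simp only [pick, dif_neg h1, dif_neg h2]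
      exact hadjG
  · -- card
    have hget : (List.replicate t 2 ++ a).get ⟨t + k.val, by omega⟩ = a.get k := by
      rw [List.get_eq_getElem, List.getElem_append_right (by simp)]
      simp
    rw [hget] at *
    rw [Finset.card_image_of_injOn hpickinj]
    exact hclique.2
end

section
/- Let p ≥ 2 be an integer and let b_1, ..., b_s be positive integers with Σ_{i=1}^s (b_i - 1) + 1 = p + 1 and max{b_1,...,b_s} ≤ p. Then the complement of the cycle C_{2p+1} satisfies complement(C_{2p+1}) →v (b_1, ..., b_s). -/
open SimpleGraph

/-- The cycle on `n` vertices. -/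
def cycleC (n : ℕ) : SimpleGraph (Fin n) :=
  SimpleGraph.fromRel (fun i j => (i.val + 1) % n = j.val)

open Fin.NatCast in
lemma succ_mem_closure (p : ℕ) (S : Finset (Fin (2*p+1)))
    (hcl : ∀ v ∈ S, v + 1 ∈ S) (v : Fin (2*p+1)) (hv : v ∈ S) :
    ∀ w : Fin (2*p+1), w ∈ S := by
  have key : ∀ k : ℕ, v + (k : Fin (2*p+1)) ∈ S := by
    intro k
    induction k with
    | zero => simpa using hv
    | succ k ih =>
      have : v + ((k+1 : ℕ) : Fin (2*p+1)) = (v + (k : Fin (2*p+1))) + 1 := by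
        rw [Nat.cast_succ, add_assoc]
      rw [this]; exact hcl _ ih
  intro w
  have := key (w - v).val
  rwa [Fin.cast_val_eq_self, add_sub_cancel] at this

lemma key_lemma (p : ℕ) (hp : 2 ≤ p) : ∀ (b : ℕ), b ≤ p → ∀ (S : Finset (Fin (2*p+1))),
    2 * b ≤ S.card + 1 →
    ∃ T ⊆ S, T.card = b ∧ ∀ u ∈ T, ∀ v ∈ T, u ≠ v → ¬ (cycleC (2*p+1)).Adj u v := by
  intro b
  induction b with
  | zero => intro _ S _; exact ⟨∅, by simp⟩
  | succ b ih =>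
    intro hbp S hS
    by_cases hcl : ∀ v ∈ S, v + 1 ∈ S
    · -- S is the whole vertex set
      have hne : S.Nonempty := by
        apply Finset.card_pos.mp; omega
      obtain ⟨v, hv⟩ := hne
      have hall := succ_mem_closure p S hcl v hv
      refine ⟨Finset.image (fun k : Fin (b+1) => (⟨2*k.val, by omega⟩ : Fin (2*p+1)))
        Finset.univ, ?_, ?_, ?_⟩
      · intro x _; exact hall x
      · rw [Finset.card_image_of_injective _ ?_, Finset.card_univ, Fintype.card_fin]
        intro i j hij
        have : 2 * i.val = 2 * j.val := congrArg Fin.val hij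
        exact Fin.ext (by omega)
      · intro u hu w hw huw hadj
        simp only [Finset.mem_image, Finset.mem_univ, true_and] at hu hw
        obtain ⟨i, rfl⟩ := hu
        obtain ⟨j, rfl⟩ := hw
        rw [cycleC, fromRel_adj] at hadj
        obtain ⟨-, h | h⟩ := hadj <;>
        · simp only at h
          have hi := i.isLt
          have hj := j.isLt
          rw [Nat.mod_eq_of_lt (by omega)] at h
          omega
    · push_neg at hcl
      obtain ⟨v, hv, hv1⟩ := hcl
      have hcard : 2 * b ≤ (S \ {v, v - 1}).card + 1 := by
        have h1 := Finset.le_card_sdiff ({v, v - 1} : Finset (Fin (2*p+1))) S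
        have h2 : ({v, v - 1} : Finset (Fin (2*p+1))).card ≤ 2 :=
          (Finset.card_insert_le _ _).trans (by simp)
        omega
      obtain ⟨T, hTS, hTcard, hTgood⟩ := ih (by omega) (S \ {v, v - 1}) hcard
      have hvT : v ∉ T := by
        intro h
        have := hTS h
        simp at this
      have hnadjv : ∀ u ∈ T, ¬ (cycleC (2*p+1)).Adj u v := by
        intro u hu hadj
        rw [cycleC, fromRel_adj] at hadj
        obtain ⟨hne, h | h⟩ := hadj
        · have h1 : u + 1 = v := by
            apply Fin.ext
            rw [Fin.add_def]
            simpa using h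
          have h2 : u = v - 1 := eq_sub_of_add_eq h1
          have := hTS hu
          rw [Finset.mem_sdiff] at this
          exact this.2 (by simp [h2])
        · have h1 : v + 1 = u := by
            apply Fin.ext
            rw [Fin.add_def]
            simpa using h
          have huS : u ∈ S := (Finset.mem_sdiff.mp (hTS hu)).1
          rw [← h1] at huS
          exact hv1 huS
      refine ⟨insert v T, ?_, ?_, ?_⟩
      · intro x hx
        rcases Finset.mem_insert.mp hx with rfl | hx
        · exact hv
        · exact (Finset.mem_sdiff.mp (hTS hx)).1
      · rw [Finset.card_insert_of_notMem hvT, hTcard]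
      · intro x hx y hy hxy hadj
        rcases Finset.mem_insert.mp hx with hx' | hx'
        · rcases Finset.mem_insert.mp hy with hy' | hy'
          · exact hxy (hx'.trans hy'.symm)
          · exact hnadjv y hy' (hx' ▸ hadj).symm
        · rcases Finset.mem_insert.mp hy with hy' | hy'
          · exact hnadjv x hx' (hy' ▸ hadj)
          · exact hTgood x hx' y hy' hxy hadj

theorem complement_cycle_arrows' (p : ℕ) (hp : 2 ≤ p) (b : List ℕ) (hne : b ≠ [])
    (hb : ∀ x ∈ b, 0 < x) (hsum : (b.map (· - 1)).sum + 1 = p + 1)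
    (hmax : ∀ x ∈ b, x ≤ p) :
    ∀ c : Fin (2*p+1) → Fin b.length, ∃ i : Fin b.length, ∃ S : Finset (Fin (2*p+1)),
      (∀ v ∈ S, c v = i) ∧ ((cycleC (2 * p + 1))ᶜ).IsNClique (b.get i) S := by
  intro c
  by_contra hcon
  push_neg at hcon
  have hbound : ∀ i : Fin b.length,
      (Finset.univ.filter (fun v => c v = i)).card ≤ 2 * (b.get i - 1) := by
    intro i
    by_contra hle
    push_neg at hle
    have hbi : 0 < b.get i := hb _ (b.get_mem i)
    have hS : 2 * (b.get i) ≤ (Finset.univ.filter (fun v => c v = i)).card + 1 := by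
      omega
    obtain ⟨T, hTS, hTcard, hTgood⟩ :=
      key_lemma p hp (b.get i) (hmax _ (b.get_mem i)) _ hS
    refine hcon i T (fun v hv => (Finset.mem_filter.mp (hTS hv)).2) ?_
    constructor
    · intro x hx y hy hxy
      rw [compl_adj]
      exact ⟨hxy, hTgood x hx y hy hxy⟩
    · exact hTcard
  have hfib : 2 * p + 1 = ∑ i : Fin b.length,
      (Finset.univ.filter (fun v => c v = i)).card := by
    have h := Finset.card_eq_sum_card_fiberwise (f := c) (s := Finset.univ)
      (t := Finset.univ) (fun x _ => Finset.mem_univ _)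
    simpa using h
  have hle2 : ∑ i : Fin b.length, (Finset.univ.filter (fun v => c v = i)).card
      ≤ ∑ i : Fin b.length, 2 * (b.get i - 1) :=
    Finset.sum_le_sum (fun i _ => hbound i)
  have hms : ∑ i : Fin b.length, (b.get i - 1) = (b.map (· - 1)).sum := by
    simpa [List.get_eq_getElem] using Fin.sum_univ_fun_getElem b (· - 1)
  rw [← Finset.mul_sum, hms] at hle2
  rw [← hfib] at hle2
  omega

theorem complement_cycle_arrows (p : ℕ) (hp : 2 ≤ p) (b : List ℕ) (hne : b ≠ [])
    (hb : ∀ x ∈ b, 0 < x) (hsum : (b.map (· - 1)).sum + 1 = p + 1)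
    (hmax : ∀ x ∈ b, x ≤ p) :
    VArrows ((cycleC (2 * p + 1))ᶜ) b :=
  complement_cycle_arrows' p hp b hne hb hsum hmax
end

section
/- For positive integers a_1,...,a_s with m = Σ(a_i − 1) + 1 and p = max{a_1,...,a_s}, and any q > p: every graph G with G →v (a_1,...,a_s) also satisfies G →v (2_{m−p}, p), i.e. the arrowing relation with m − p twos followed by p; consequently F_v(2_{m−p}, p; q) ≤ F_v(a_1,...,a_s; q). -/
open SimpleGraph

/-- The vertex Folkman number `F_v(a; q)`. -/
noncomputable def Fv (a : List ℕ) (q : ℕ) : ℕ :=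
  sInf {n : ℕ | ∃ G : SimpleGraph (Fin n), VArrows G a ∧ G.CliqueFree q}

section Aux

open Finset

lemma varrows_merge {V : Type} [Fintype V] (G : SimpleGraph V) (aL bL : List ℕ)
    (f : Fin bL.length → Fin aL.length)
    (hcond : ∀ i : Fin aL.length,
      (∑ k ∈ Finset.univ.filter (fun k => f k = i), (bL.get k - 1)) + 1 ≤ aL.get i)
    (h : VArrows G aL) : VArrows G bL := by
  intro c
  obtain ⟨i, S, hSc, hclq⟩ := h (fun v => f (c v))
  have hcard : S.card = aL.get i := hclq.card_eq
  have hmaps : ∀ v ∈ S, c v ∈ Finset.univ.filter (fun k => f k = i) := by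
    intro v hv
    simp only [Finset.mem_filter, Finset.mem_univ, true_and]
    exact hSc v hv
  have hsum : S.card = ∑ k ∈ Finset.univ.filter (fun k => f k = i),
      (S.filter (fun v => c v = k)).card :=
    Finset.card_eq_sum_card_fiberwise hmaps
  have hex : ∃ k ∈ Finset.univ.filter (fun k => f k = i),
      bL.get k ≤ (S.filter (fun v => c v = k)).card := by
    by_contra hall
    push_neg at hall
    have hle : ∑ k ∈ Finset.univ.filter (fun k => f k = i),
        (S.filter (fun v => c v = k)).card
        ≤ ∑ k ∈ Finset.univ.filter (fun k => f k = i), (bL.get k - 1) := by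
      apply Finset.sum_le_sum
      intro k hk
      have := hall k hk
      omega
    have := hcond i
    omega
  obtain ⟨k, hkf, hkc⟩ := hex
  obtain ⟨T, hTsub, hTcard⟩ := Finset.exists_subset_card_eq hkc
  refine ⟨k, T, ?_, ?_⟩
  · intro v hv
    exact (Finset.mem_filter.1 (hTsub hv)).2
  · exact ⟨hclq.isClique.subset (hTsub.trans (Finset.filter_subset _ _)), hTcard⟩

theorem part1 (a : List ℕ) (m p : ℕ) (hne : a ≠ [])
    (ha : ∀ x ∈ a, 2 ≤ x) (hmax : ∀ x ∈ a, x ≤ p) (hmem : p ∈ a)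
    (hm : m = (a.map (· - 1)).sum + 1) :
    ∀ (V : Type) [Fintype V] (G : SimpleGraph V), VArrows G a →
        VArrows G (List.replicate (m - p) 2 ++ [p]) := by
  intro V _ G hG
  have hp2 : 2 ≤ p := ha p hmem
  obtain ⟨i₀, hi₀⟩ := List.mem_iff_get.1 hmem
  set b := List.replicate (m - p) 2 ++ [p] with hb
  have hlen : b.length = (m - p) + 1 := by simp [hb]
  set w : Fin a.length → ℕ := fun i => if i = i₀ then 0 else a.get i - 1 with hw
  have h1 : (a.map (· - 1)).sum = ∑ i : Fin a.length, (a.get i - 1) :=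
    (Fin.sum_univ_fun_getElem a (· - 1)).symm
  have h2 : ∑ i : Fin a.length, (a.get i - 1)
      = (∑ i ∈ Finset.univ.erase i₀, (a.get i - 1)) + (p - 1) := by
    rw [← hi₀, Finset.sum_erase_add _ _ (Finset.mem_univ i₀)]
  have h3 : ∑ i : Fin a.length, w i = ∑ i ∈ Finset.univ.erase i₀, (a.get i - 1) := by
    rw [← Finset.sum_erase_add _ w (Finset.mem_univ i₀)]
    have hw0 : w i₀ = 0 := by simp [hw]
    rw [hw0, add_zero]
    exact Finset.sum_congr rfl fun i hi => by
      simp [hw, (Finset.mem_erase.1 hi).1]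
  have hcardsum : Fintype.card ((i : Fin a.length) × Fin (w i)) = m - p := by
    rw [Fintype.card_sigma]
    simp only [Fintype.card_fin]
    omega
  set e := Fintype.equivFinOfCardEq hcardsum with he
  set F : ℕ → Fin a.length :=
    fun j => if h : j < m - p then (e.symm ⟨j, h⟩).1 else i₀ with hF
  have hFlt : ∀ (j : ℕ) (h : j < m - p), F j = (e.symm ⟨j, h⟩).1 := fun j h => dif_pos h
  have hFlast : F (m - p) = i₀ := dif_neg (by omega)
  have hval : ∀ (k : ℕ) (hk : k < b.length),
      b.get ⟨k, hk⟩ = if k < m - p then 2 else p := by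
    intro k hk
    rw [List.get_eq_getElem]
    show (List.replicate (m - p) 2 ++ [p])[k]'(by simpa [hb] using hk) = _
    by_cases h : k < m - p
    · rw [if_pos h, List.getElem_append_left (by simpa using h)]
      simp
    · have hk' : k = m - p := by
        have hk2 := hk
        rw [hlen] at hk2
        omega
      rw [if_neg h]
      subst hk'
      rw [List.getElem_append_right (by simp)]
      simp
  apply varrows_merge G a b (fun k => F k.val) _ hG
  intro i
  set φ : ℕ → ℕ := fun j => if F j = i then ((if j < m - p then 2 else p) - 1) else 0 with hφ
  have hs1 : (∑ k ∈ Finset.univ.filter (fun k => F k.val = i), (b.get k - 1))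
      = ∑ k : Fin b.length, φ k.val := by
    rw [Finset.sum_filter]
    refine Finset.sum_congr rfl fun k _ => ?_
    rw [hval k.val k.isLt]
  have hs2 : ∑ k : Fin b.length, φ k.val = ∑ j ∈ Finset.range b.length, φ j :=
    Fin.sum_univ_eq_sum_range φ b.length
  have hs3 : ∑ j ∈ Finset.range b.length, φ j
      = (∑ j ∈ Finset.range (m - p), φ j) + φ (m - p) := by
    rw [hlen, Finset.sum_range_succ]
  have hs4 : φ (m - p) = if i₀ = i then p - 1 else 0 := by
    show (if F (m - p) = i then ((if m - p < m - p then 2 else p) - 1) else 0) = _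
    rw [hFlast, if_neg (lt_irrefl (m - p))]
  have hs5 : ∑ j ∈ Finset.range (m - p), φ j
      = ((Finset.range (m - p)).filter (fun j => F j = i)).card := by
    rw [Finset.card_filter]
    refine Finset.sum_congr rfl fun j hj => ?_
    have hjlt := Finset.mem_range.1 hj
    show (if F j = i then ((if j < m - p then 2 else p) - 1) else 0) = _
    rw [if_pos hjlt]
  have hs6 : ((Finset.range (m - p)).filter (fun j => F j = i)).card
      = (Finset.univ.filter (fun σ : (i : Fin a.length) × Fin (w i) => σ.1 = i)).card := by
    refine Finset.card_bij' (fun j hj => e.symm ⟨j,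
        Finset.mem_range.1 (Finset.mem_filter.1 hj).1⟩)
      (fun σ _ => (e σ).val) ?_ ?_ ?_ ?_
    case refine_1 =>
      intro j hj
      obtain ⟨hj1, hj2⟩ := Finset.mem_filter.1 hj
      have hjlt := Finset.mem_range.1 hj1
      simp only [Finset.mem_filter, Finset.mem_univ, true_and]
      rw [hFlt j hjlt] at hj2
      exact hj2
    case refine_2 =>
      intro σ hσ
      have hσ1 := (Finset.mem_filter.1 hσ).2
      refine Finset.mem_filter.2 ⟨Finset.mem_range.2 (e σ).isLt, ?_⟩
      rw [hFlt _ (e σ).isLt]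
      show (e.symm (e σ)).fst = i
      rw [Equiv.symm_apply_apply]
      exact hσ1
    case refine_3 =>
      intro j hj
      show (e (e.symm ⟨j, _⟩)).val = j
      rw [Equiv.apply_symm_apply]
    case refine_4 =>
      intro σ hσ
      show e.symm (e σ) = σ
      rw [Equiv.symm_apply_apply]
  have hs7 : (Finset.univ.filter (fun σ : (i : Fin a.length) × Fin (w i) => σ.1 = i)).card
      = w i := by
    have hsig : Finset.univ.filter (fun σ : (i : Fin a.length) × Fin (w i) => σ.1 = i)
        = Finset.sigma {i} (fun j => Finset.univ) := by
      ext ⟨j, v⟩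
      simp [Finset.mem_sigma, eq_comm]
    rw [hsig, Finset.card_sigma]
    simp
  have hai : 2 ≤ a.get i := ha _ (List.get_mem a i)
  rw [hs1, hs2, hs3, hs4, hs5, hs6, hs7]
  by_cases hii : i = i₀
  · subst hii
    rw [if_pos rfl]
    have hwz : w i = 0 := by simp [hw]
    omega
  · have hne1 : (if i₀ = i then p - 1 else 0) = 0 := if_neg (fun h => hii h.symm)
    have hwi : w i = a.get i - 1 := by simp [hw, hii]
    omega


/-- homogeneous set for a coloring of `p`-element subsets -/
def Homog {κ : Type} (f : Finset ℕ → κ) (p : ℕ) (M : Finset ℕ) : Prop :=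
  ∀ A ⊆ M, ∀ B ⊆ M, A.card = p → B.card = p → f A = f B

/-- end-homogeneity relative to a reservoir -/
def PreH {κ : Type} (f : Finset ℕ → κ) (p : ℕ) (E T : Finset ℕ) : Prop :=
  ∀ P ⊆ E, P.card = p → ∀ a b : ℕ, a ∈ E ∪ T → b ∈ E ∪ T →
    (∀ x ∈ P, x < a) → (∀ x ∈ P, x < b) → f (insert a P) = f (insert b P)

lemma exists_preh {κ : Type} [Fintype κ] [DecidableEq κ] (p : ℕ) :
    ∀ t M : ℕ, ∃ N : ℕ, ∀ f : Finset ℕ → κ, ∀ S : Finset ℕ, N ≤ S.card →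
      ∃ E T : Finset ℕ, E ⊆ S ∧ T ⊆ S ∧ (∀ x ∈ E, ∀ y ∈ T, x < y) ∧
        E.card = t ∧ M ≤ T.card ∧ PreH f p E T := by
  intro t
  induction t with
  | zero =>
    intro M
    by_cases hp : p = 0
    · subst hp
      refine ⟨Fintype.card κ * M, fun f S hS => ?_⟩
      haveI hκ : Nonempty κ := ⟨f ∅⟩
      obtain ⟨c, _, hc⟩ := Finset.exists_le_card_fiber_of_mul_le_card_of_maps_to
        (f := fun y => f {y}) (fun a _ => Finset.mem_univ _) Finset.univ_nonempty
        (by rwa [Finset.card_univ])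
      refine ⟨∅, S.filter (fun y => f {y} = c), Finset.empty_subset _,
        Finset.filter_subset _ _, by simp, rfl, hc, ?_⟩
      intro P hP hPc a b ha hb _ _
      have hPe : P = ∅ := Finset.subset_empty.1 hP
      subst hPe
      rw [Finset.empty_union] at ha hb
      have h1 : f {a} = c := (Finset.mem_filter.1 ha).2
      have h2 : f {b} = c := (Finset.mem_filter.1 hb).2
      simpa using h1.trans h2.symm
    · refine ⟨M, fun f S hS => ?_⟩
      obtain ⟨T, hTS, hTc⟩ := Finset.exists_subset_card_eq hS
      refine ⟨∅, T, Finset.empty_subset _, hTS, by simp, rfl, le_of_eq hTc.symm, ?_⟩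
      intro P hP hPc
      exact absurd (hPc ▸ congrArg Finset.card (Finset.subset_empty.1 hP)) (by simpa using hp)
  | succ t ih =>
    intro M
    obtain ⟨N₀, h₀⟩ := ih (Fintype.card κ ^ ((t + 1).choose p) * M + 1)
    refine ⟨N₀, fun f S hS => ?_⟩
    obtain ⟨E, T, hES, hTS, hET, hEcard, hTcard, hpre⟩ := h₀ f S hS
    have hTne : T.Nonempty := Finset.card_pos.1 (by omega)
    set x := T.min' hTne with hx
    have hxT : x ∈ T := T.min'_mem hTne
    have hxE : x ∉ E := fun h => lt_irrefl x (hET x h x hxT)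
    set E' := insert x E with hE'
    have hE'card : E'.card = t + 1 := by rw [hE', Finset.card_insert_of_notMem hxE, hEcard]
    set T₀ := T.erase x with hT₀
    set χ : ℕ → (↥(E'.powersetCard p) → κ) := fun y Q => f (insert y Q.val) with hχ
    haveI hκ : Nonempty κ := ⟨f ∅⟩
    have hcards : (Finset.univ : Finset (↥(E'.powersetCard p) → κ)).card
        = Fintype.card κ ^ ((t + 1).choose p) := by
      rw [Finset.card_univ, Fintype.card_fun, Fintype.card_coe,
        Finset.card_powersetCard, hE'card]
    obtain ⟨y0, _, hfib⟩ := Finset.exists_le_card_fiber_of_mul_le_card_of_maps_to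
      (f := χ) (s := T₀) (n := M) (fun a _ => Finset.mem_univ _) Finset.univ_nonempty
      (by
        rw [hcards, hT₀, Finset.card_erase_of_mem hxT]
        omega)
    set T' := T₀.filter (fun y => χ y = y0) with hT'
    have hT'T₀ : T' ⊆ T₀ := Finset.filter_subset _ _
    have hT'T : T' ⊆ T := hT'T₀.trans (Finset.erase_subset _ _)
    have hxlt : ∀ y ∈ T', x < y := by
      intro y hy
      have hyT₀ := hT'T₀ hy
      exact lt_of_le_of_ne (T.min'_le y (Finset.mem_of_mem_erase hyT₀))
        (Ne.symm (Finset.mem_erase.1 hyT₀).1)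
    refine ⟨E', T', ?_, hT'T.trans hTS, ?_, hE'card, hfib, ?_⟩
    · intro z hz
      rcases Finset.mem_insert.1 hz with h | h
      · exact h ▸ hTS hxT
      · exact hES h
    · intro z hz y hy
      rcases Finset.mem_insert.1 hz with h | h
      · exact h ▸ hxlt y hy
      · exact hET z h y (hT'T hy)
    · intro P hPE' hPcard a b ha hb hPa hPb
      by_cases hxP : x ∈ P
      · have hmem : ∀ z, z ∈ E' ∪ T' → (∀ w ∈ P, w < z) → z ∈ T' := by
          intro z hz hPz
          have hxz : x < z := hPz x hxP
          rcases Finset.mem_union.1 hz with h | h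
          · rcases Finset.mem_insert.1 h with h' | h'
            · exact absurd (h' ▸ hxz) (lt_irrefl z)
            · exact absurd (lt_trans (hET z h' x hxT) hxz) (lt_irrefl z)
          · exact h
        have haT' := hmem a ha hPa
        have hbT' := hmem b hb hPb
        have hQ : P ∈ E'.powersetCard p := Finset.mem_powersetCard.2 ⟨hPE', hPcard⟩
        have h1 : χ a = y0 := (Finset.mem_filter.1 haT').2
        have h2 : χ b = y0 := (Finset.mem_filter.1 hbT').2
        have : χ a ⟨P, hQ⟩ = χ b ⟨P, hQ⟩ := by rw [h1, h2]
        exact this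
      · have hPE : P ⊆ E := by
          intro z hz
          rcases Finset.mem_insert.1 (hPE' hz) with h | h
          · exact absurd (h ▸ hz) hxP
          · exact h
        have hup : ∀ z, z ∈ E' ∪ T' → z ∈ E ∪ T := by
          intro z hz
          rcases Finset.mem_union.1 hz with h | h
          · rcases Finset.mem_insert.1 h with h' | h'
            · exact h' ▸ Finset.mem_union_right _ hxT
            · exact Finset.mem_union_left _ h'
          · exact Finset.mem_union_right _ (hT'T h)
        exact hpre P hPE hPcard a b (hup a ha) (hup b hb) hPa hPb

theorem ramsey {κ : Type} [Fintype κ] [DecidableEq κ] (p k : ℕ) :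
    ∃ N, ∀ f : Finset ℕ → κ, ∀ S : Finset ℕ, N ≤ S.card →
      ∃ M, M ⊆ S ∧ M.card = k ∧ Homog f p M := by
  induction p generalizing k with
  | zero =>
    refine ⟨k, fun f S hS => ?_⟩
    obtain ⟨M, hMS, hMc⟩ := Finset.exists_subset_card_eq hS
    refine ⟨M, hMS, hMc, fun A hA B hB hAc hBc => ?_⟩
    rw [Finset.card_eq_zero.1 hAc, Finset.card_eq_zero.1 hBc]
  | succ p ih =>
    obtain ⟨N₁, h₁⟩ := ih k
    obtain ⟨N₂, h₂⟩ := exists_preh (κ := κ) p N₁ 0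
    refine ⟨N₂, fun f S hS => ?_⟩
    obtain ⟨E, T, hES, hTS, hET, hEcard, _, hpre⟩ := h₂ f S hS
    set g : Finset ℕ → κ := fun P =>
      if h : (E.filter (fun y => ∀ x ∈ P, x < y)).Nonempty
      then f (insert ((E.filter (fun y => ∀ x ∈ P, x < y)).min' h) P) else f P with hg
    obtain ⟨M, hME, hMc, hhom⟩ := h₁ g E (le_of_eq hEcard.symm)
    refine ⟨M, hME.trans hES, hMc, ?_⟩
    have key : ∀ A, A ⊆ M → A.card = p + 1 → ∃ A', A' ⊆ M ∧ A'.card = p ∧ f A = g A' := by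
      intro A hAM hAc
      have hAne : A.Nonempty := Finset.card_pos.1 (by omega)
      set amax := A.max' hAne with hamax
      set A' := A.erase amax with hA'
      have hA'M : A' ⊆ M := (Finset.erase_subset _ _).trans hAM
      have hA'c : A'.card = p := by
        rw [hA', Finset.card_erase_of_mem (A.max'_mem hAne), hAc]
        omega
      have hA'lt : ∀ x ∈ A', x < amax := fun x hx =>
        lt_of_le_of_ne (A.le_max' x (Finset.mem_of_mem_erase hx)) (Finset.mem_erase.1 hx).1
      have hamaxE : amax ∈ E := hME (hAM (A.max'_mem hAne))
      have hANE : (E.filter (fun y => ∀ x ∈ A', x < y)).Nonempty :=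
        ⟨amax, Finset.mem_filter.2 ⟨hamaxE, hA'lt⟩⟩
      set z := (E.filter (fun y => ∀ x ∈ A', x < y)).min' hANE with hz
      have hzmem := Finset.min'_mem _ hANE
      have hzE : z ∈ E := (Finset.mem_filter.1 hzmem).1
      have hzlt : ∀ x ∈ A', x < z := (Finset.mem_filter.1 hzmem).2
      have hfg : f A = f (insert z A') := by
        have hins : A = insert amax A' := (Finset.insert_erase (A.max'_mem hAne)).symm
        rw [hins]
        exact hpre A' (hA'M.trans hME) hA'c amax z
          (Finset.mem_union_left _ hamaxE) (Finset.mem_union_left _ hzE) hA'lt hzlt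
      have hgd : g A' = f (insert z A') := dif_pos hANE
      exact ⟨A', hA'M, hA'c, by rw [hfg, hgd]⟩
    intro A hA B hB hAc hBc
    obtain ⟨A', hA1, hA2, hA3⟩ := key A hA hAc
    obtain ⟨B', hB1, hB2, hB3⟩ := key B hB hBc
    rw [hA3, hB3]
    exact hhom A' hA1 B' hB1 hA2 hB2


/-- window relation between two finsets of naturals -/
def WRel (A B : Finset ℕ) : Prop :=
  (A ∩ B).Nonempty ∧ (∀ x ∈ A \ B, ∀ y ∈ A ∩ B, x < y) ∧
    (∀ y ∈ A ∩ B, ∀ z ∈ B \ A, y < z)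

lemma inter_card_lt {A B : Finset ℕ} {p : ℕ} (hA : A.card = p) (hB : B.card = p)
    (hne : A ≠ B) : (A ∩ B).card < p := by
  have hsub : A ∩ B ⊆ A := Finset.inter_subset_left
  have hle : (A ∩ B).card ≤ p := hA ▸ Finset.card_le_card hsub
  rcases lt_or_eq_of_le hle with h | h
  · exact h
  · exfalso
    have : A ∩ B = A := Finset.eq_of_subset_of_card_le hsub (by omega)
    have hAB : A ⊆ B := by rw [← Finset.inter_eq_left]; exact this
    exact hne (Finset.eq_of_subset_of_card_le hAB (by omega))

lemma wrel_min {A B : Finset ℕ} (hA : A.Nonempty) (hB : B.Nonempty)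
    (hcard : A.card = B.card) (h : WRel A B) (hne : A ≠ B) :
    A.min' hA < B.min' hB := by
  obtain ⟨hI, h1, h2⟩ := h
  set a₀ := A.min' hA with ha₀d
  have ha₀ : a₀ ∈ A := A.min'_mem hA
  set b₀ := B.min' hB with hb₀d
  have hb₀ : b₀ ∈ B := B.min'_mem hB
  by_cases hbA : b₀ ∈ A
  · have hle : a₀ ≤ b₀ := A.min'_le b₀ hbA
    rcases lt_or_eq_of_le hle with h | h
    · exact h
    · exfalso
      have haI : a₀ ∈ A ∩ B := Finset.mem_inter.2 ⟨ha₀, by rw [h]; exact hb₀⟩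
      have hAB : A ⊆ B := by
        intro x hxA
        by_contra hxB
        exact absurd (A.min'_le x hxA)
          (not_le.2 (h1 x (Finset.mem_sdiff.2 ⟨hxA, hxB⟩) a₀ haI))
      exact hne (Finset.eq_of_subset_of_card_le hAB (le_of_eq hcard.symm))
  · exfalso
    obtain ⟨y, hy⟩ := hI
    have h3 := h2 y hy b₀ (Finset.mem_sdiff.2 ⟨hb₀, hbA⟩)
    exact absurd (B.min'_le y (Finset.mem_inter.1 hy).2) (not_le.2 h3)

lemma wrel_comp {A B C : Finset ℕ} {p : ℕ}
    (hB : B.card = p)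
    (hAB : WRel A B) (hBC : WRel B C) (hAC : WRel A C) :
    p + (A ∩ C).card ≤ (A ∩ B).card + (B ∩ C).card := by
  obtain ⟨hI1, hab1, hab2⟩ := hAB
  obtain ⟨hI2, hbc1, hbc2⟩ := hBC
  obtain ⟨hI3, hac1, hac2⟩ := hAC
  have hsub : A ∩ C ⊆ (A ∩ B) ∩ (B ∩ C) := by
    intro x hx
    obtain ⟨hxA, hxC⟩ := Finset.mem_inter.1 hx
    have hxB : x ∈ B := by
      by_contra hxB
      obtain ⟨y1, hy1⟩ := hI1
      obtain ⟨y2, hy2⟩ := hI2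
      have hxy1 : x < y1 := hab1 x (Finset.mem_sdiff.2 ⟨hxA, hxB⟩) y1 hy1
      have hy2x : y2 < x := hbc2 y2 hy2 x (Finset.mem_sdiff.2 ⟨hxC, hxB⟩)
      by_cases hy2A : y2 ∈ A
      · have : x < y2 := hab1 x (Finset.mem_sdiff.2 ⟨hxA, hxB⟩) y2
          (Finset.mem_inter.2 ⟨hy2A, (Finset.mem_inter.1 hy2).1⟩)
        omega
      · have : y1 < y2 := hab2 y1 hy1 y2
          (Finset.mem_sdiff.2 ⟨(Finset.mem_inter.1 hy2).1, hy2A⟩)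
        omega
    exact Finset.mem_inter.2 ⟨Finset.mem_inter.2 ⟨hxA, hxB⟩,
      Finset.mem_inter.2 ⟨hxB, hxC⟩⟩
  have huni : (A ∩ B) ∪ (B ∩ C) = B := by
    apply Finset.Subset.antisymm
    · exact Finset.union_subset Finset.inter_subset_right Finset.inter_subset_left
    · intro b hb
      by_contra hnb
      rw [Finset.mem_union] at hnb
      push_neg at hnb
      obtain ⟨hn1, hn2⟩ := hnb
      have hbA : b ∈ B \ A := Finset.mem_sdiff.2
        ⟨hb, fun h => hn1 (Finset.mem_inter.2 ⟨h, hb⟩)⟩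
      have hbC : b ∈ B \ C := Finset.mem_sdiff.2
        ⟨hb, fun h => hn2 (Finset.mem_inter.2 ⟨hb, h⟩)⟩
      obtain ⟨x, hx⟩ := hI3
      have hxin := hsub hx
      obtain ⟨hx1, hx2⟩ := Finset.mem_inter.1 hxin
      have h4 : x < b := hab2 x hx1 b hbA
      have h5 : b < x := hbc1 b hbC x hx2
      omega
  calc p + (A ∩ C).card = B.card + (A ∩ C).card := by rw [hB]
    _ ≤ ((A ∩ B) ∪ (B ∩ C)).card + ((A ∩ B) ∩ (B ∩ C)).card := by
        rw [huni]
        exact Nat.add_le_add_left (Finset.card_le_card hsub) _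
    _ = (A ∩ B).card + (B ∩ C).card := Finset.card_union_add_card_inter _ _

lemma chain_bound (p : ℕ) (hp : 0 < p) :
    ∀ (k : ℕ) (F : Finset (Finset ℕ)), F.card = k → (∀ A ∈ F, A.card = p) →
    (∀ A ∈ F, ∀ B ∈ F, A ≠ B → WRel A B ∨ WRel B A) → 2 ≤ k →
    ∃ A ∈ F, ∃ B ∈ F, WRel A B ∧ (A ∩ B).card + k ≤ p + 1 := by
  intro k
  induction k with
  | zero => intro F _ _ _ h2; omega
  | succ k ih =>
    intro F hFc hFp hFadj h2
    have hne : ∀ A ∈ F, A.Nonempty := fun A hA => Finset.card_pos.1 (by rw [hFp A hA]; omega)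
    -- direction of adjacency towards element with larger min
    have hdir : ∀ A, ∀ hA : A ∈ F, ∀ B, ∀ hB : B ∈ F, A ≠ B →
        (A.min' (hne A hA) < B.min' (hne B hB)) → WRel A B := by
      intro A hA B hB hAB hlt
      rcases hFadj A hA B hB hAB with h | h
      · exact h
      · exfalso
        have := wrel_min (hne B hB) (hne A hA)
          (by rw [hFp A hA, hFp B hB]) h (Ne.symm hAB)
        omega
    by_cases hk : k < 2
    · -- base : F.card = 2
      have hc2 : F.card = 2 := by omega
      obtain ⟨A, B, hABne, hFe⟩ := Finset.card_eq_two.1 hc2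
      have hAF : A ∈ F := by rw [hFe]; simp
      have hBF : B ∈ F := by rw [hFe]; simp
      have hbound : (A ∩ B).card + (k + 1) ≤ p + 1 := by
        have := inter_card_lt (hFp A hAF) (hFp B hBF) hABne
        have hI : (A ∩ B).card = (B ∩ A).card := by rw [Finset.inter_comm]
        omega
      rcases hFadj A hAF B hBF hABne with h | h
      · exact ⟨A, hAF, B, hBF, h, by omega⟩
      · refine ⟨B, hBF, A, hAF, h, ?_⟩
        rw [Finset.inter_comm]
        omega
    · -- step : k ≥ 2
      have hFne : F.Nonempty := Finset.card_pos.1 (by omega)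
      obtain ⟨C, hCF, hCmax⟩ := F.exists_max_image
        (fun A => if h : A.Nonempty then A.min' h else 0) hFne
      have hkey : ∀ D, ∀ hD : D ∈ F,
          (if h : D.Nonempty then D.min' h else 0) = D.min' (hne D hD) := by
        intro D hD
        rw [dif_pos (hne D hD)]
      set F' := F.erase C with hF'
      have hF'c : F'.card = k := by
        rw [hF', Finset.card_erase_of_mem hCF, hFc]
        omega
      have hsubF : F' ⊆ F := Finset.erase_subset _ _
      obtain ⟨A, hAF', B, hBF', hWAB, hIH⟩ := ih F' hF'c
        (fun A hA => hFp A (hsubF hA)) (fun A hA B hB => hFadj A (hsubF hA) B (hsubF hB))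
        (by omega)
      have hAF := hsubF hAF'
      have hBF := hsubF hBF'
      have hACne : A ≠ C := (Finset.mem_erase.1 hAF').1
      have hBCne : B ≠ C := (Finset.mem_erase.1 hBF').1
      have htoC : ∀ D, ∀ hD : D ∈ F, D ≠ C → WRel D C := by
        intro D hD hDC
        rcases hFadj D hD C hCF hDC with h | h
        · exact h
        · exfalso
          have hlt := wrel_min (hne C hCF) (hne D hD)
            (by rw [hFp C hCF, hFp D hD]) h (Ne.symm hDC)
          have hle := hCmax D hD
          rw [hkey D hD, hkey C hCF] at hle
          omega
      have hWBC := htoC B hBF hBCne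
      have hWAC := htoC A hAF hACne
      have hcomp := wrel_comp (hFp B hBF) hWAB hWBC hWAC
      have hBCc : (B ∩ C).card < p := inter_card_lt (hFp B hBF) (hFp C hCF) hBCne
      refine ⟨A, hAF, C, hCF, hWAC, ?_⟩
      omega


/-- the window graph -/
def WGraph (N p : ℕ) : SimpleGraph {A // A ∈ (Finset.range N).powersetCard p} where
  Adj A B := A ≠ B ∧ (WRel A.val B.val ∨ WRel B.val A.val)
  symm := ⟨by
    intro A B h
    exact ⟨h.1.symm, h.2.symm⟩⟩
  loopless := ⟨fun A h => h.1 rfl⟩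

lemma wgraph_cliquefree (N p : ℕ) (hp : 0 < p) : (WGraph N p).CliqueFree (p + 1) := by
  intro s hs
  set F := s.image (fun A => A.val) with hF
  have hcard : F.card = p + 1 := by
    rw [hF, Finset.card_image_of_injective _ Subtype.val_injective, hs.card_eq]
  have hFp : ∀ A ∈ F, A.card = p := by
    intro A hA
    obtain ⟨a, ha, rfl⟩ := Finset.mem_image.1 hA
    exact (Finset.mem_powersetCard.1 a.2).2
  have hadj : ∀ A ∈ F, ∀ B ∈ F, A ≠ B → WRel A B ∨ WRel B A := by
    intro A hA B hB hne
    obtain ⟨a, ha, rfl⟩ := Finset.mem_image.1 hA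
    obtain ⟨b, hb, rfl⟩ := Finset.mem_image.1 hB
    have hab : a ≠ b := fun h => hne (by rw [h])
    have hadj' : a ≠ b ∧ (WRel a.val b.val ∨ WRel b.val a.val) := hs.isClique ha hb hab
    exact hadj'.2
  obtain ⟨A, hA, B, hB, hW, hbound⟩ := chain_bound p hp (p + 1) F hcard hFp hadj (by omega)
  have hc := Finset.card_pos.2 hW.1
  omega

lemma wgraph_arrows (p s : ℕ) (hp : 2 ≤ p) (hs : 0 < s) :
    ∃ N, ∀ c : {A // A ∈ (Finset.range N).powersetCard p} → Fin s,
      ∃ (γ : Fin s) (T : Finset {A // A ∈ (Finset.range N).powersetCard p}),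
        (∀ v ∈ T, c v = γ) ∧ (WGraph N p).IsNClique p T := by
  obtain ⟨N, hN⟩ := ramsey (κ := Fin s) p (2 * p - 1)
  refine ⟨N, fun c => ?_⟩
  haveI hsne : Nonempty (Fin s) := ⟨⟨0, hs⟩⟩
  set f : Finset ℕ → Fin s := fun A =>
    if h : A ∈ (Finset.range N).powersetCard p then c ⟨A, h⟩ else Classical.arbitrary _
    with hfdef
  obtain ⟨M, hMS, hMc, hhom⟩ := hN f (Finset.range N) (by rw [Finset.card_range])
  set e := M.orderIsoOfFin hMc with he
  set E : ℕ → ℕ := fun j => if h : j < 2 * p - 1 then (e ⟨j, h⟩ : ℕ) else 0 with hE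
  have hEval : ∀ (j : ℕ) (h : j < 2 * p - 1), E j = (e ⟨j, h⟩ : ℕ) := fun j h => dif_pos h
  have hEmem : ∀ (j : ℕ), j < 2 * p - 1 → E j ∈ M := by
    intro j hj
    rw [hEval j hj]
    exact (e ⟨j, hj⟩).2
  have hEmono : ∀ i j : ℕ, i < j → j < 2 * p - 1 → E i < E j := by
    intro i j hij hj
    rw [hEval i (by omega), hEval j hj]
    have : (⟨i, by omega⟩ : Fin (2 * p - 1)) < ⟨j, hj⟩ := by
      simp [Fin.lt_def]
      omega
    exact Subtype.coe_lt_coe.2 (e.strictMono this)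
  have hEinj : ∀ i j : ℕ, i < 2 * p - 1 → j < 2 * p - 1 → E i = E j → i = j := by
    intro i j hi hj hEq
    by_contra hne
    rcases Nat.lt_or_ge i j with h | h
    · exact absurd hEq (Nat.ne_of_lt (hEmono i j h hj))
    · have : j < i := by omega
      exact absurd hEq.symm (Nat.ne_of_lt (hEmono j i this hi))
  set W : ℕ → Finset ℕ := fun i => (Finset.range p).image (fun t => E (i + t)) with hW
  -- basic window facts, for i < p
  have hWmem : ∀ i x, x ∈ W i ↔ ∃ u, i ≤ u ∧ u < i + p ∧ x = E u := by
    intro i x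
    constructor
    · intro hx
      obtain ⟨t, ht, rfl⟩ := Finset.mem_image.1 hx
      exact ⟨i + t, by omega, by have := Finset.mem_range.1 ht; omega, rfl⟩
    · rintro ⟨u, h1, h2, rfl⟩
      exact Finset.mem_image.2 ⟨u - i, Finset.mem_range.2 (by omega), by rw [Nat.add_sub_cancel' h1]⟩
  have hWsub : ∀ i, i < p → W i ⊆ M := by
    intro i hi x hx
    obtain ⟨u, h1, h2, rfl⟩ := (hWmem i x).1 hx
    exact hEmem u (by omega)
  have hWcard : ∀ i, i < p → (W i).card = p := by
    intro i hi
    rw [hW]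
    rw [Finset.card_image_of_injOn, Finset.card_range]
    intro t1 h1 t2 h2 hEq
    have h1' := Finset.mem_range.1 h1
    have h2' := Finset.mem_range.1 h2
    have := hEinj (i + t1) (i + t2) (by omega) (by omega) hEq
    omega
  have hWpc : ∀ i, i < p → W i ∈ (Finset.range N).powersetCard p := by
    intro i hi
    exact Finset.mem_powersetCard.2 ⟨(hWsub i hi).trans hMS, hWcard i hi⟩
  -- windows are WRel-related
  have hWrel : ∀ i j, i < j → j < p → WRel (W i) (W j) := by
    intro i j hij hj
    refine ⟨?_, ?_, ?_⟩
    · refine ⟨E j, Finset.mem_inter.2 ⟨?_, ?_⟩⟩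
      · exact (hWmem i (E j)).2 ⟨j, by omega, by omega, rfl⟩
      · exact (hWmem j (E j)).2 ⟨j, le_refl j, by omega, rfl⟩
    · intro x hx y hy
      obtain ⟨hxi, hxj⟩ := Finset.mem_sdiff.1 hx
      obtain ⟨u, hu1, hu2, rfl⟩ := (hWmem i x).1 hxi
      obtain ⟨hyi, hyj⟩ := Finset.mem_inter.1 hy
      obtain ⟨v, hv1, hv2, rfl⟩ := (hWmem j y).1 hyj
      have hult : u < j := by
        by_contra hun
        exact hxj ((hWmem j (E u)).2 ⟨u, by omega, by omega, rfl⟩)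
      exact hEmono u v (by omega) (by omega)
    · intro y hy z hz
      obtain ⟨hyi, hyj⟩ := Finset.mem_inter.1 hy
      obtain ⟨u, hu1, hu2, rfl⟩ := (hWmem i y).1 hyi
      obtain ⟨hzj, hzi⟩ := Finset.mem_sdiff.1 hz
      obtain ⟨v, hv1, hv2, rfl⟩ := (hWmem j z).1 hzj
      have hvge : i + p ≤ v := by
        by_contra hvn
        exact hzi ((hWmem i (E v)).2 ⟨v, by omega, by omega, rfl⟩)
      exact hEmono u v (by omega) (by omega)
  have hWne : ∀ i j, i < j → j < p → W i ≠ W j := by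
    intro i j hij hj hEq
    have hiWi : E i ∈ W i := (hWmem i (E i)).2 ⟨i, le_refl i, by omega, rfl⟩
    rw [hEq] at hiWi
    obtain ⟨u, hu1, hu2, huE⟩ := (hWmem j (E i)).1 hiWi
    have := hEinj i u (by omega) (by omega) huE
    omega
  -- the vertices
  have h0p : 0 < p := by omega
  set vtx : ℕ → {A // A ∈ (Finset.range N).powersetCard p} := fun i =>
    if h : W i ∈ (Finset.range N).powersetCard p then ⟨W i, h⟩ else ⟨W 0, hWpc 0 h0p⟩
    with hvtx
  have hvtxval : ∀ i, i < p → (vtx i).val = W i := by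
    intro i hi
    rw [hvtx]
    simp only [hWpc i hi, dite_true]
  have hvtxcol : ∀ i, i < p → c (vtx i) = f (W i) := by
    intro i hi
    have h1 : f (W i) = c ⟨W i, hWpc i hi⟩ := dif_pos (hWpc i hi)
    rw [h1]
    congr 1
    exact Subtype.ext (hvtxval i hi)
  set T := (Finset.range p).image vtx with hT
  have hTcard : T.card = p := by
    rw [hT, Finset.card_image_of_injOn, Finset.card_range]
    intro i h1 j h2 hEq
    have h1' := Finset.mem_range.1 h1
    have h2' := Finset.mem_range.1 h2
    by_contra hne
    have hvv : (vtx i).val = (vtx j).val := by rw [hEq]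
    rw [hvtxval i h1', hvtxval j h2'] at hvv
    rcases Nat.lt_or_ge i j with h | h
    · exact hWne i j h h2' hvv
    · exact hWne j i (by omega) h1' hvv.symm
  refine ⟨c (vtx 0), T, ?_, ?_, hTcard⟩
  · intro v hv
    obtain ⟨i, hi, rfl⟩ := Finset.mem_image.1 hv
    have hi' := Finset.mem_range.1 hi
    rw [hvtxcol i hi', hvtxcol 0 h0p]
    have hWiM : W i ⊆ M := hWsub i hi'
    have hW0M : W 0 ⊆ M := hWsub 0 h0p
    exact hhom (W i) hWiM (W 0) hW0M (hWcard i hi') (hWcard 0 h0p)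
  · -- IsClique
    intro x hx y hy hxy
    obtain ⟨i, hi, rfl⟩ := Finset.mem_image.1 hx
    obtain ⟨j, hj, rfl⟩ := Finset.mem_image.1 hy
    have hi' := Finset.mem_range.1 hi
    have hj' := Finset.mem_range.1 hj
    have hij : i ≠ j := fun h => hxy (by rw [h])
    show vtx i ≠ vtx j ∧ (WRel (vtx i).val (vtx j).val ∨ WRel (vtx j).val (vtx i).val)
    refine ⟨hxy, ?_⟩
    rcases Nat.lt_or_ge i j with h | h
    · left
      rw [hvtxval i hi', hvtxval j hj']
      exact hWrel i j h hj'
    · right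
      rw [hvtxval i hi', hvtxval j hj']
      exact hWrel j i (by omega) hi'


theorem folkman_exists (a : List ℕ) (p q : ℕ) (hne : a ≠ []) (ha2 : ∀ x ∈ a, 2 ≤ x)
    (hmax : ∀ x ∈ a, x ≤ p) (hmem : p ∈ a) (hq : p < q) :
    ∃ n : ℕ, ∃ G : SimpleGraph (Fin n), VArrows G a ∧ G.CliqueFree q := by
  have hp : 2 ≤ p := ha2 p hmem
  have hs : 0 < a.length := List.length_pos_iff.2 hne
  obtain ⟨N, hN⟩ := wgraph_arrows p a.length hp hs
  set G := WGraph N p with hG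
  set n := Fintype.card {A // A ∈ (Finset.range N).powersetCard p} with hn
  set e := (Fintype.equivFin {A // A ∈ (Finset.range N).powersetCard p}) with he
  set G' : SimpleGraph (Fin n) := G.comap (fun x => e.symm x) with hG'
  refine ⟨n, G', ?_, ?_⟩
  · intro c
    obtain ⟨γ, T, hTc, hclq⟩ := hN (fun v => c (e v))
    have hle : a.get γ ≤ T.card := by
      rw [hclq.card_eq]
      exact hmax _ (List.get_mem a γ)
    obtain ⟨T', hT's, hT'c⟩ := Finset.exists_subset_card_eq hle
    refine ⟨γ, T'.image (fun v => e v), ?_, ?_, ?_⟩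
    · intro x hx
      obtain ⟨v, hv, rfl⟩ := Finset.mem_image.1 hx
      exact hTc v (hT's hv)
    · intro x hx y hy hxy
      obtain ⟨v, hv, rfl⟩ := Finset.mem_image.1 (Finset.mem_coe.1 hx)
      obtain ⟨w, hw, rfl⟩ := Finset.mem_image.1 (Finset.mem_coe.1 hy)
      have hvw : v ≠ w := fun h => hxy (by rw [h])
      have hadj := hclq.isClique (Finset.mem_coe.2 (hT's hv))
        (Finset.mem_coe.2 (hT's hw)) hvw
      show G.Adj (e.symm (e v)) (e.symm (e w))
      simpa [Equiv.symm_apply_apply] using hadj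
    · rw [Finset.card_image_of_injective _ e.injective, hT'c]
  · have hfree : G.CliqueFree (p + 1) := wgraph_cliquefree N p (by omega)
    have hfree' : G'.CliqueFree (p + 1) := by
      intro t ht
      refine hfree (t.image (fun x => e.symm x)) ⟨?_, ?_⟩
      · intro x hx y hy hxy
        obtain ⟨v, hv, rfl⟩ := Finset.mem_image.1 (Finset.mem_coe.1 hx)
        obtain ⟨w, hw, rfl⟩ := Finset.mem_image.1 (Finset.mem_coe.1 hy)
        have hvw : v ≠ w := fun h => hxy (by rw [h])
        exact ht.isClique (Finset.mem_coe.2 hv) (Finset.mem_coe.2 hw) hvw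
      · rw [Finset.card_image_of_injective _ e.symm.injective, ht.card_eq]
    exact hfree'.mono (by omega)

end Aux

theorem reduce_to_twos (a : List ℕ) (m p q : ℕ) (hne : a ≠ [])
    (ha : ∀ x ∈ a, 2 ≤ x) (hmax : ∀ x ∈ a, x ≤ p) (hmem : p ∈ a)
    (hm : m = (a.map (· - 1)).sum + 1) (hq : p < q) :
    (∀ (V : Type) [Fintype V] (G : SimpleGraph V), VArrows G a →
        VArrows G (List.replicate (m - p) 2 ++ [p])) ∧
    Fv (List.replicate (m - p) 2 ++ [p]) q ≤ Fv a q := by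
  have hpart1 := part1 a m p hne ha hmax hmem hm
  refine ⟨hpart1, ?_⟩
  have hAne : {n : ℕ | ∃ G : SimpleGraph (Fin n), VArrows G a ∧ G.CliqueFree q}.Nonempty := by
    obtain ⟨n, G, h1, h2⟩ := folkman_exists a p q hne ha hmax hmem hq
    exact ⟨n, G, h1, h2⟩
  have hmem' : Fv a q ∈ {n : ℕ | ∃ G : SimpleGraph (Fin n), VArrows G a ∧ G.CliqueFree q} :=
    Nat.sInf_mem hAne
  obtain ⟨G, hG1, hG2⟩ := hmem'
  exact Nat.sInf_le ⟨G, hpart1 _ G hG1, hG2⟩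
end

section
/- For integers 2 ≤ s ≤ r and p ≥ 2 such that the Folkman numbers exist, F_v(2_r, p; r + p − 1) ≤ F_v(2_s, p; s + p − 1) + r − s. -/
open SimpleGraph

namespace FolkAux

/-- `Res G s p`: after removing any `s` independent sets, a `p`-clique remains. -/
def Res {V : Type} (G : SimpleGraph V) (s p : ℕ) : Prop :=
  ∀ I : Fin s → Set V, (∀ j, ∀ x ∈ I j, ∀ y ∈ I j, ¬ G.Adj x y) →
    ∃ S : Finset V, G.IsNClique p S ∧ ∀ v ∈ S, ∀ j, v ∉ I j

/-- package on `Fin n` -/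
def Pk (n s p q : ℕ) : Prop :=
  ∃ G : SimpleGraph (Fin n), Res G s p ∧ G.CliqueFree q

def EX (s p : ℕ) : Prop := ∃ n, Pk n s p (s + p - 1)

variable {V W : Type}

lemma clique_card_lt {G : SimpleGraph V} {n : ℕ} (h : G.CliqueFree n)
    {S : Finset V} (hS : G.IsClique ↑S) : S.card < n := by
  by_contra hc
  push_neg at hc
  obtain ⟨T, hTS, hT⟩ := Finset.exists_subset_card_eq hc
  exact h T ⟨hS.subset (by exact_mod_cast hTS), hT⟩

/-- relabel a graph on a fintype to `Fin n`. -/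
lemma pk_relabel {U : Type} [Fintype U] (G : SimpleGraph U) {n s p q : ℕ}
    (h : Fintype.card U = n) (hres : Res G s p) (hcf : G.CliqueFree q) :
    Pk n s p q := by
  classical
  let e : U ≃ Fin n := (Fintype.equivFin U).trans (finCongr h)
  refine ⟨G.comap e.symm, ?_, ?_⟩
  · intro I hI
    obtain ⟨S, hS, hav⟩ := hres (fun j => {u : U | e u ∈ I j}) (by
      intro j x hx y hy hadj
      have : (G.comap ⇑e.symm).Adj (e x) (e y) := by
        simp only [comap_adj, Equiv.symm_apply_apply]
        exact hadj
      exact hI j _ hx _ hy this)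
    refine ⟨S.map e.toEmbedding, ?_, ?_⟩
    · constructor
      · rintro x hx y hy hne
        simp only [Finset.coe_map, Set.mem_image, Finset.mem_coe] at hx hy
        obtain ⟨u, hu, rfl⟩ := hx
        obtain ⟨v, hv, rfl⟩ := hy
        have huv : u ≠ v := fun hh => hne (by rw [hh])
        have := hS.1 hu hv huv
        simp only [comap_adj, Equiv.toEmbedding_apply, Equiv.symm_apply_apply]
        exact this
      · rw [Finset.card_map]; exact hS.2
    · intro v hv j hvj
      simp only [Finset.mem_map, Equiv.toEmbedding_apply] at hv
      obtain ⟨u, hu, rfl⟩ := hv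
      exact hav u hu j hvj
  · intro S hS
    have hcl : G.IsClique ↑(S.map e.symm.toEmbedding) := by
      rintro x hx y hy hne
      simp only [Finset.coe_map, Set.mem_image, Finset.mem_coe] at hx hy
      obtain ⟨u, hu, rfl⟩ := hx
      obtain ⟨v, hv, rfl⟩ := hy
      have huv : u ≠ v := fun hh => hne (by rw [hh])
      exact hS.1 hu hv huv
    have := clique_card_lt hcf hcl
    rw [Finset.card_map, hS.2] at this
    omega


variable {V W : Type}

def jAdj (G : SimpleGraph V) (H : SimpleGraph W) : V ⊕ W → V ⊕ W → Prop
  | Sum.inl a, Sum.inl b => G.Adj a b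
  | Sum.inr a, Sum.inr b => H.Adj a b
  | _, _ => True

def joinG (G : SimpleGraph V) (H : SimpleGraph W) : SimpleGraph (V ⊕ W) where
  Adj := jAdj G H
  symm := by
    constructor
    rintro (a|a) (b|b) h
    · exact (G.adj_symm h : _)
    · trivial
    · trivial
    · exact (H.adj_symm h : _)
  loopless := by
    constructor
    rintro (a|a) h
    · exact G.irrefl h
    · exact H.irrefl h

@[simp] lemma joinG_ll {G : SimpleGraph V} {H : SimpleGraph W} {a b : V} :
    (joinG G H).Adj (Sum.inl a) (Sum.inl b) ↔ G.Adj a b := Iff.rfl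
@[simp] lemma joinG_rr {G : SimpleGraph V} {H : SimpleGraph W} {a b : W} :
    (joinG G H).Adj (Sum.inr a) (Sum.inr b) ↔ H.Adj a b := Iff.rfl
@[simp] lemma joinG_lr {G : SimpleGraph V} {H : SimpleGraph W} {a : V} {b : W} :
    (joinG G H).Adj (Sum.inl a) (Sum.inr b) := trivial
@[simp] lemma joinG_rl {G : SimpleGraph V} {H : SimpleGraph W} {a : W} {b : V} :
    (joinG G H).Adj (Sum.inr a) (Sum.inl b) := trivial

lemma joinG_cliqueFree {G : SimpleGraph V} {H : SimpleGraph W} {a b : ℕ}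
    (hG : G.CliqueFree (a + 1)) (hH : H.CliqueFree (b + 1)) :
    (joinG G H).CliqueFree (a + b + 1) := by
  intro S hS
  have hl : G.IsClique ↑S.toLeft := by
    intro x hx y hy hne
    simp only [Finset.coe_sort_coe, Finset.mem_coe, Finset.mem_toLeft] at hx hy
    have := hS.1 hx hy (fun hh => hne (Sum.inl_injective hh))
    exact this
  have hr : H.IsClique ↑S.toRight := by
    intro x hx y hy hne
    simp only [Finset.coe_sort_coe, Finset.mem_coe, Finset.mem_toRight] at hx hy
    exact hS.1 hx hy (fun hh => hne (Sum.inr_injective hh))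
  have h1 := clique_card_lt hG hl
  have h2 := clique_card_lt hH hr
  have h3 : S.toLeft.card + S.toRight.card = S.card := Finset.card_toLeft_add_card_toRight
  rw [hS.2] at h3
  omega

/-- cone step -/
lemma res_cone {G : SimpleGraph V} {s p : ℕ} (hp : 1 ≤ p) (hres : Res G s p) :
    Res (joinG (⊥ : SimpleGraph (Fin 1)) G) (s + 1) p := by
  classical
  intro I hI
  by_cases hu : ∃ j₀, Sum.inl (0 : Fin 1) ∈ I j₀
  · obtain ⟨j₀, hj₀⟩ := hu
    -- I j₀ contains no inr
    have hno : ∀ w : V, Sum.inr w ∉ I j₀ := by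
      intro w hw
      exact hI j₀ _ hj₀ _ hw joinG_lr
    obtain ⟨S, hS, hav⟩ := hres (fun i => {w : V | Sum.inr w ∈ I (j₀.succAbove i)}) (by
      intro j x hx y hy hadj
      exact hI _ _ hx _ hy (joinG_rr.mpr hadj))
    refine ⟨S.map ⟨Sum.inr, Sum.inr_injective⟩, ?_, ?_⟩
    · constructor
      · rintro x hx y hy hne
        simp only [Finset.coe_map, Set.mem_image, Finset.mem_coe, Function.Embedding.coeFn_mk] at hx hy
        obtain ⟨u, hu', rfl⟩ := hx
        obtain ⟨v, hv', rfl⟩ := hy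
        exact joinG_rr.mpr (hS.1 hu' hv' (fun hh => hne (by rw [hh])))
      · rw [Finset.card_map]; exact hS.2
    · intro v hv j hvj
      simp only [Finset.mem_map, Function.Embedding.coeFn_mk] at hv
      obtain ⟨u, hu', rfl⟩ := hv
      rcases eq_or_ne j j₀ with rfl | hne
      · exact hno u hvj
      · obtain ⟨i, hi⟩ := Fin.exists_succAbove_eq hne
        exact hav u hu' i (show Sum.inr u ∈ I (j₀.succAbove i) by rw [hi]; exact hvj)
  · push_neg at hu
    -- u is free; use first s sets, then drop at most one vertex hit by the last
    obtain ⟨S, hS, hav⟩ := hres (fun i => {w : V | Sum.inr w ∈ I i.castSucc}) (by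
      intro j x hx y hy hadj
      exact hI _ _ hx _ hy (joinG_rr.mpr hadj))
    -- at most one vertex of S lies in the last set
    have hone : ∀ x ∈ S, ∀ y ∈ S, Sum.inr x ∈ I (Fin.last s) → Sum.inr y ∈ I (Fin.last s) → x = y := by
      intro x hx y hy hxm hym
      by_contra hne
      exact hI (Fin.last s) _ hxm _ hym (joinG_rr.mpr (hS.1 hx hy hne))
    by_cases hhit : ∃ x ∈ S, Sum.inr x ∈ I (Fin.last s)
    · obtain ⟨x₀, hx₀, hx₀m⟩ := hhit
      refine ⟨insert (Sum.inl 0) ((S.erase x₀).map ⟨Sum.inr, Sum.inr_injective⟩), ?_, ?_⟩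
      · constructor
        · rintro a ha b hb hne
          simp only [Finset.coe_insert, Set.mem_insert_iff, Finset.coe_map,
            Set.mem_image, Finset.mem_coe, Function.Embedding.coeFn_mk] at ha hb
          rcases ha with rfl | ⟨u, hu', rfl⟩ <;> rcases hb with rfl | ⟨v, hv', rfl⟩
          · exact absurd rfl hne
          · exact joinG_lr
          · exact joinG_rl
          · exact joinG_rr.mpr (hS.1 (Finset.mem_of_mem_erase hu') (Finset.mem_of_mem_erase hv')
              (fun hh => hne (by rw [hh])))
        · rw [Finset.card_insert_of_notMem (by simp), Finset.card_map,
            Finset.card_erase_of_mem hx₀, hS.2]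
          omega
      · intro v hv j hvj
        simp only [Finset.mem_insert, Finset.mem_map, Function.Embedding.coeFn_mk] at hv
        rcases hv with rfl | ⟨u, hu', rfl⟩
        · exact hu j hvj
        · rcases Fin.eq_castSucc_or_eq_last j with ⟨i, rfl⟩ | rfl
          · exact hav u (Finset.mem_of_mem_erase hu') i hvj
          · exact (Finset.ne_of_mem_erase hu') (hone u (Finset.mem_of_mem_erase hu') x₀ hx₀ hvj hx₀m)
    · push_neg at hhit
      refine ⟨S.map ⟨Sum.inr, Sum.inr_injective⟩, ?_, ?_⟩
      · constructor
        · rintro a ha b hb hne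
          simp only [Finset.coe_map, Set.mem_image, Finset.mem_coe, Function.Embedding.coeFn_mk] at ha hb
          obtain ⟨u, hu', rfl⟩ := ha
          obtain ⟨v, hv', rfl⟩ := hb
          exact joinG_rr.mpr (hS.1 hu' hv' (fun hh => hne (by rw [hh])))
        · rw [Finset.card_map]; exact hS.2
      · intro v hv j hvj
        simp only [Finset.mem_map, Function.Embedding.coeFn_mk] at hv
        obtain ⟨u, hu', rfl⟩ := hv
        rcases Fin.eq_castSucc_or_eq_last j with ⟨i, rfl⟩ | rfl
        · exact hav u hu' i hvj
        · exact hhit u hu' hvj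

/-- join step: triangle-ish side contributes an edge, other side a `p`-clique -/
lemma res_join {T : SimpleGraph V} {G : SimpleGraph W} {s p : ℕ}
    (hT : Res T s 2) (hG : Res G s p) :
    Res (joinG T G) s (p + 2) := by
  classical
  intro I hI
  obtain ⟨ST, hST, havT⟩ := hT (fun j => {x : V | Sum.inl x ∈ I j}) (by
    intro j x hx y hy hadj
    exact hI _ _ hx _ hy (joinG_ll.mpr hadj))
  obtain ⟨SG, hSG, havG⟩ := hG (fun j => {w : W | Sum.inr w ∈ I j}) (by
    intro j x hx y hy hadj
    exact hI _ _ hx _ hy (joinG_rr.mpr hadj))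
  refine ⟨ST.map ⟨Sum.inl, Sum.inl_injective⟩ ∪ SG.map ⟨Sum.inr, Sum.inr_injective⟩, ?_, ?_⟩
  · constructor
    · rintro a ha b hb hne
      simp only [Finset.coe_union, Set.mem_union, Finset.coe_map, Set.mem_image,
        Finset.mem_coe, Function.Embedding.coeFn_mk] at ha hb
      rcases ha with ⟨u, hu, rfl⟩ | ⟨u, hu, rfl⟩ <;> rcases hb with ⟨v, hv, rfl⟩ | ⟨v, hv, rfl⟩
      · exact joinG_ll.mpr (hST.1 hu hv (fun hh => hne (by rw [hh])))
      · exact joinG_lr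
      · exact joinG_rl
      · exact joinG_rr.mpr (hSG.1 hu hv (fun hh => hne (by rw [hh])))
    · have hdisj : Disjoint (ST.map ⟨Sum.inl, Sum.inl_injective⟩)
          (SG.map ⟨Sum.inr, Sum.inr_injective⟩) := by
        simp only [Finset.disjoint_left, Finset.mem_map, Function.Embedding.coeFn_mk]
        rintro a ⟨u, hu, rfl⟩ ⟨v, hv, h⟩
        exact absurd h (by simp)
      rw [Finset.card_union_of_disjoint hdisj,
        Finset.card_map, Finset.card_map, hST.2, hSG.2]
      omega
  · intro v hv j hvj
    simp only [Finset.mem_union, Finset.mem_map, Function.Embedding.coeFn_mk] at hv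
    rcases hv with ⟨u, hu, rfl⟩ | ⟨u, hu, rfl⟩
    · exact havT u hu j hvj
    · exact havG u hu j hvj


-- shift graph
def ShV (n : ℕ) : Type := {q : Fin n × Fin n // q.1 < q.2}

instance (n : ℕ) : Fintype (ShV n) := by unfold ShV; infer_instance
instance (n : ℕ) : DecidableEq (ShV n) := by unfold ShV; infer_instance

def Sh (n : ℕ) : SimpleGraph (ShV n) where
  Adj x y := x.1.2 = y.1.1 ∨ y.1.2 = x.1.1
  symm := by constructor; intro x y h; exact h.symm
  loopless := by
    constructor
    intro x h
    rcases h with h | h <;> exact absurd (h ▸ x.2) (lt_irrefl _)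

lemma sh_cliqueFree (n : ℕ) : (Sh n).CliqueFree 3 := by
  intro S hS
  obtain ⟨a, b, c, hab, hac, hbc, rfl⟩ := Finset.card_eq_three.mp hS.2
  have h1 : (Sh n).Adj a b := hS.1 (by simp) (by simp) hab
  have h2 : (Sh n).Adj a c := hS.1 (by simp) (by simp) hac
  have h3 : (Sh n).Adj b c := hS.1 (by simp) (by simp) hbc
  have ha := a.2; have hb := b.2; have hc := c.2
  simp only [Fin.lt_def] at ha hb hc
  rcases h1 with h1 | h1 <;> rcases h2 with h2 | h2 <;> rcases h3 with h3 | h3 <;>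
    [skip; skip; skip; skip; skip; skip; skip; skip] <;>
    · have e1 := congrArg Fin.val h1
      have e2 := congrArg Fin.val h2
      have e3 := congrArg Fin.val h3
      omega

lemma sh_res (s : ℕ) : Res (Sh (2 ^ (s + 1) + 1)) s 2 := by
  classical
  set n := 2 ^ (s + 1) + 1 with hn
  intro I hI
  by_contra hno
  push_neg at hno
  -- every edge is hit
  have hedge : ∀ x y : ShV n, (Sh n).Adj x y → (∀ j, x ∉ I j) → (∀ j, y ∉ I j) → False := by
    intro x y hadj hx hy
    have hne : x ≠ y := (Sh n).ne_of_adj hadj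
    have hcl : (Sh n).IsNClique 2 {x, y} := by
      constructor
      · intro u hu w hw hnew
        simp only [Finset.coe_insert, Set.mem_insert_iff, Finset.coe_singleton,
          Set.mem_singleton_iff] at hu hw
        rcases hu with rfl | rfl <;> rcases hw with rfl | rfl
        · exact absurd rfl hnew
        · exact hadj
        · exact hadj.symm
        · exact absurd rfl hnew
      · rw [Finset.card_insert_of_notMem (by simpa using hne), Finset.card_singleton]
    obtain ⟨v, hv, j, hvj⟩ := hno {x, y} hcl
    simp only [Finset.mem_insert, Finset.mem_singleton] at hv
    rcases hv with rfl | rfl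
    · exact hx j hvj
    · exact hy j hvj
  -- classes
  let memC : Fin (s + 1) → ShV n → Prop := fun c w =>
    if h : (c : ℕ) < s then w ∈ I ⟨c, h⟩ else ∀ j, w ∉ I j
  have K1 : ∀ w : ShV n, ∃ c, memC c w := by
    intro w
    by_cases h : ∃ j, w ∈ I j
    · obtain ⟨j, hj⟩ := h
      refine ⟨j.castSucc, ?_⟩
      simp only [memC, Fin.coe_castSucc, j.isLt, dif_pos]
      convert hj using 2
    · push_neg at h
      exact ⟨Fin.last s, by simp only [memC, Fin.val_last, lt_irrefl, dif_neg, not_false_iff]; exact h⟩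
  have K2 : ∀ (c : Fin (s + 1)) (w₁ w₂ : ShV n), (Sh n).Adj w₁ w₂ → memC c w₁ → memC c w₂ → False := by
    intro c w₁ w₂ hadj h1 h2
    by_cases h : (c : ℕ) < s
    · simp only [memC, dif_pos h] at h1 h2
      exact hI _ _ h1 _ h2 hadj
    · simp only [memC, dif_neg h] at h1 h2
      exact hedge w₁ w₂ hadj h1 h2
  -- injection
  let f : Fin n → Finset (Fin (s + 1)) := fun v =>
    Finset.univ.filter (fun c => ∃ u : ShV n, u.1.2 = v ∧ memC c u)
  have hmono : ∀ v₁ v₂ : Fin n, v₁ < v₂ → f v₁ = f v₂ → False := by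
    intro v₁ v₂ hlt hf
    set w : ShV n := ⟨(v₁, v₂), hlt⟩ with hw
    obtain ⟨c, hc⟩ := K1 w
    have hc2 : c ∈ f v₂ := by
      simp only [f, Finset.mem_filter, Finset.mem_univ, true_and]
      exact ⟨w, rfl, hc⟩
    rw [← hf] at hc2
    simp only [f, Finset.mem_filter, Finset.mem_univ, true_and] at hc2
    obtain ⟨u, hu2, huc⟩ := hc2
    have hadj : (Sh n).Adj u w := Or.inl hu2
    exact K2 c u w hadj huc hc
  have hinj : Function.Injective f := by
    intro v₁ v₂ hf
    by_contra hne
    rcases lt_or_gt_of_ne hne with h | h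
    · exact hmono v₁ v₂ h hf
    · exact hmono v₂ v₁ h hf.symm
  have := Fintype.card_le_of_injective f hinj
  rw [Fintype.card_fin, Fintype.card_finset, Fintype.card_fin] at this
  omega


lemma no_triangle {α : Type} {M : SimpleGraph α} (hM3 : M.CliqueFree 3) {x y z : α}
    (h1 : M.Adj x y) (h2 : M.Adj x z) (h3 : M.Adj y z) : False := by
  classical
  refine hM3 {x, y, z} ⟨?_, ?_⟩
  · intro u hu w hw hne
    simp only [Finset.coe_insert, Set.mem_insert_iff, Finset.coe_singleton,
      Set.mem_singleton_iff] at hu hw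
    rcases hu with rfl | rfl | rfl <;> rcases hw with rfl | rfl | rfl <;>
      first
        | exact absurd rfl hne
        | exact h1 | exact h1.symm | exact h2 | exact h2.symm | exact h3 | exact h3.symm
  · exact Finset.card_eq_three.mpr ⟨x, y, z, h1.ne, h2.ne, h3.ne, rfl⟩

variable {m : ℕ} (M : SimpleGraph (Fin m))

def AV : Type := {q : Fin m × Fin m // M.Adj q.1 q.2 ∧ q.1 < q.2}

instance : DecidableEq (AV M) := by unfold AV; infer_instance
instance : Finite (AV M) := by unfold AV; exact Subtype.finite
noncomputable instance : Fintype (AV M) := Fintype.ofFinite _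

def apexAdj : Fin m ⊕ AV M → Fin m ⊕ AV M → Prop
  | Sum.inl x, Sum.inl y => M.Adj x y
  | Sum.inl x, Sum.inr e => x = e.1.1 ∨ x = e.1.2
  | Sum.inr e, Sum.inl x => x = e.1.1 ∨ x = e.1.2
  | Sum.inr e, Sum.inr f => e.1.2 = f.1.1 ∨ f.1.2 = e.1.1

def ApexG : SimpleGraph (Fin m ⊕ AV M) where
  Adj := apexAdj M
  symm := by
    constructor
    rintro (x|e) (y|f) h
    · exact (M.adj_symm h : _)
    · exact h
    · exact h
    · exact Or.symm h
  loopless := by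
    constructor
    rintro (x|e) h
    · exact M.irrefl h
    · rcases h with h | h <;> exact absurd (h ▸ e.2.2) (lt_irrefl _)

section helpers
variable {M}

lemma A2 {x y : Fin m} {e f : AV M} (hxy : M.Adj x y)
    (hxe : x = e.1.1 ∨ x = e.1.2) (hye : y = e.1.1 ∨ y = e.1.2)
    (hxf : x = f.1.1 ∨ x = f.1.2) (hyf : y = f.1.1 ∨ y = f.1.2)
    (hef : e.1.2 = f.1.1 ∨ f.1.2 = e.1.1) : False := by
  have hne : x ≠ y := hxy.ne
  have he := e.2.2; have hf := f.2.2
  simp only [Fin.lt_def] at he hf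
  simp only [Fin.ext_iff] at hxe hye hxf hyf hef hne
  rcases hxe with h1 | h1 <;> rcases hye with h2 | h2 <;> rcases hxf with h3 | h3 <;>
    rcases hyf with h4 | h4 <;> rcases hef with h5 | h5 <;> omega

lemma A3 {x : Fin m} {e f g : AV M}
    (hxe : x = e.1.1 ∨ x = e.1.2) (hxf : x = f.1.1 ∨ x = f.1.2) (hxg : x = g.1.1 ∨ x = g.1.2)
    (hef : e.1.2 = f.1.1 ∨ f.1.2 = e.1.1) (hfg : f.1.2 = g.1.1 ∨ g.1.2 = f.1.1)
    (heg : e.1.2 = g.1.1 ∨ g.1.2 = e.1.1) : False := by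
  have he := e.2.2; have hf := f.2.2; have hg := g.2.2
  simp only [Fin.lt_def] at he hf hg
  simp only [Fin.ext_iff] at hxe hxf hxg hef hfg heg
  rcases hxe with h1 | h1 <;> rcases hxf with h2 | h2 <;> rcases hxg with h3 | h3 <;>
    rcases hef with h4 | h4 <;> rcases hfg with h5 | h5 <;> rcases heg with h6 | h6 <;> omega

lemma A4 {e f g : AV M}
    (hef : e.1.2 = f.1.1 ∨ f.1.2 = e.1.1) (hfg : f.1.2 = g.1.1 ∨ g.1.2 = f.1.1)
    (heg : e.1.2 = g.1.1 ∨ g.1.2 = e.1.1) : False := by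
  have he := e.2.2; have hf := f.2.2; have hg := g.2.2
  simp only [Fin.lt_def] at he hf hg
  simp only [Fin.ext_iff] at hef hfg heg
  rcases hef with h4 | h4 <;> rcases hfg with h5 | h5 <;> rcases heg with h6 | h6 <;> omega

end helpers

lemma apex_cliqueFree (hM3 : M.CliqueFree 3) : (ApexG M).CliqueFree 4 := by
  classical
  intro S hS
  obtain ⟨a, T, haT, hins, hT3⟩ := Finset.card_eq_succ.mp hS.2
  obtain ⟨b, c, d, hbc, hbd, hcd, rfl⟩ := Finset.card_eq_three.mp hT3
  subst hins
  have ma : a ∈ insert a ({b, c, d} : Finset _) := Finset.mem_insert_self _ _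
  have mb : b ∈ insert a ({b, c, d} : Finset _) := by simp
  have mc : c ∈ insert a ({b, c, d} : Finset _) := by simp
  have md : d ∈ insert a ({b, c, d} : Finset _) := by simp
  have hab : a ≠ b := fun h => haT (by simp [h])
  have hac : a ≠ c := fun h => haT (by simp [h])
  have had : a ≠ d := fun h => haT (by simp [h])
  have h1 := hS.1 ma mb hab
  have h2 := hS.1 ma mc hac
  have h3 := hS.1 ma md had
  have h4 := hS.1 mb mc hbc
  have h5 := hS.1 mb md hbd
  have h6 := hS.1 mc md hcd
  clear hS haT ma mb mc md hab hac had hbc hbd hcd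
  rcases a with x|e <;> rcases b with y|f <;> rcases c with z|g <;> rcases d with w|h
  · exact no_triangle hM3 h1 h2 h4
  · exact no_triangle hM3 h1 h2 h4
  · exact no_triangle hM3 h1 h3 h5
  · exact A2 h1 h2 h4 h3 h5 h6
  · exact no_triangle hM3 h2 h3 h6
  · exact A2 h2 h1 h4 h3 h6 h5
  · exact A2 h3 h1 h5 h2 h6 h4
  · exact A3 h1 h2 h3 h4 h6 h5
  · exact no_triangle hM3 h4 h5 h6
  · exact A2 h4 h1 h2 h5 h6 h3
  · exact A2 h5 h1 h3 h4 h6 h2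
  · exact A3 h1 h4 h5 h2 h6 h3
  · exact A2 h6 h2 h3 h4 h5 h1
  · exact A3 h2 h4 h6 h1 h5 h3
  · exact A3 h3 h5 h6 h1 h4 h2
  · exact A4 h1 h4 h2

lemma apex_res (hM3 : M.CliqueFree 3) (hMres : Res M 5 2) : Res (ApexG M) 2 3 := by
  classical
  intro I hI
  by_contra hno
  push_neg at hno
  -- every triangle of ApexG meets some I j
  have htri : ∀ (x y : Fin m) (hadj : M.Adj x y) (hlt : x < y),
      (∀ j, Sum.inl x ∉ I j) → (∀ j, Sum.inl y ∉ I j) →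
      ∃ j, Sum.inr (⟨(x, y), hadj, hlt⟩ : AV M) ∈ I j := by
    intro x y hadj hlt hx hy
    set e : AV M := ⟨(x, y), hadj, hlt⟩ with he
    have hcl : (ApexG M).IsNClique 3 {Sum.inl x, Sum.inl y, Sum.inr e} := by
      constructor
      · intro u hu w hw hne
        simp only [Finset.coe_insert, Set.mem_insert_iff, Finset.coe_singleton,
          Set.mem_singleton_iff] at hu hw
        have exy : (ApexG M).Adj (Sum.inl x) (Sum.inl y) := hadj
        have exe : (ApexG M).Adj (Sum.inl x) (Sum.inr e) := Or.inl rfl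
        have eye : (ApexG M).Adj (Sum.inl y) (Sum.inr e) := Or.inr rfl
        rcases hu with rfl | rfl | rfl <;> rcases hw with rfl | rfl | rfl <;>
          first
            | exact absurd rfl hne
            | exact exy | exact exy.symm | exact exe | exact exe.symm
            | exact eye | exact eye.symm
      · refine Finset.card_eq_three.mpr ⟨_, _, _, ?_, ?_, ?_, rfl⟩
        · simp only [ne_eq, Sum.inl.injEq]; exact hadj.ne
        · simp
        · simp
    obtain ⟨v, hv, j, hvj⟩ := hno _ hcl
    simp only [Finset.mem_insert, Finset.mem_singleton] at hv
    rcases hv with rfl | rfl | rfl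
    · exact absurd hvj (hx j)
    · exact absurd hvj (hy j)
    · exact ⟨j, hvj⟩
  -- tail-mark predicate
  let d : Fin 2 → Fin m → Prop := fun j x => ∃ e : AV M, Sum.inr e ∈ I j ∧ e.1.1 = x
  have master : ∀ (u v : Fin m), M.Adj u v → u < v →
      (∀ j, Sum.inl u ∉ I j) → (∀ j, Sum.inl v ∉ I j) → ∃ j, d j u ∧ ¬ d j v := by
    intro u v hadj hlt hu hv
    obtain ⟨j, hj⟩ := htri u v hadj hlt hu hv
    refine ⟨j, ⟨⟨(u, v), hadj, hlt⟩, hj, rfl⟩, ?_⟩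
    rintro ⟨f, hfj, hf1⟩
    refine hI j _ hj _ hfj ?_
    exact Or.inl (by rw [hf1])
  -- the five independent sets in M
  let free : Fin m → Prop := fun x => ∀ j, Sum.inl x ∉ I j
  let Sets : Fin 5 → Set (Fin m) := fun k =>
    if k = 0 then {x | Sum.inl x ∈ I 0}
    else if k = 1 then {x | Sum.inl x ∈ I 1}
    else if k = 2 then {x | free x ∧ d 0 x ∧ d 1 x}
    else if k = 3 then {x | free x ∧ d 0 x ∧ ¬ d 1 x}
    else {x | free x ∧ ¬ d 0 x ∧ d 1 x}
  have eS0 : Sets 0 = {x | Sum.inl x ∈ I 0} := by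
    simp (config := { decide := true }) only [Sets, if_true, if_false]
  have eS1 : Sets 1 = {x | Sum.inl x ∈ I 1} := by
    simp (config := { decide := true }) only [Sets, if_true, if_false]
  have eS2 : Sets 2 = {x | free x ∧ d 0 x ∧ d 1 x} := by
    simp (config := { decide := true }) only [Sets, if_true, if_false]
  have eS3 : Sets 3 = {x | free x ∧ d 0 x ∧ ¬ d 1 x} := by
    simp (config := { decide := true }) only [Sets, if_true, if_false]
  have eS4 : Sets 4 = {x | free x ∧ ¬ d 0 x ∧ d 1 x} := by
    simp (config := { decide := true }) only [Sets, if_true, if_false]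
  have hpat : ∀ (x y : Fin m), M.Adj x y → free x → free y →
      (d 0 x ↔ d 0 y) → (d 1 x ↔ d 1 y) → False := by
    intro x y hadj hx hy hd0 hd1
    rcases lt_or_gt_of_ne hadj.ne with hlt | hlt
    · obtain ⟨j, hdj, hndj⟩ := master x y hadj hlt hx hy
      fin_cases j
      · exact hndj (hd0.mp hdj)
      · exact hndj (hd1.mp hdj)
    · obtain ⟨j, hdj, hndj⟩ := master y x hadj.symm hlt hy hx
      fin_cases j
      · exact hndj (hd0.mpr hdj)
      · exact hndj (hd1.mpr hdj)
  have hSetsInd : ∀ k, ∀ x ∈ Sets k, ∀ y ∈ Sets k, ¬ M.Adj x y := by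
    intro k
    fin_cases k
    · rw [show (⟨0, by omega⟩ : Fin 5) = 0 from rfl, eS0]
      intro x hx y hy hadj
      exact hI 0 _ hx _ hy hadj
    · rw [show (⟨1, by omega⟩ : Fin 5) = 1 from rfl, eS1]
      intro x hx y hy hadj
      exact hI 1 _ hx _ hy hadj
    · rw [show (⟨2, by omega⟩ : Fin 5) = 2 from rfl, eS2]
      intro x hx y hy hadj
      exact hpat x y hadj hx.1 hy.1 (iff_of_true hx.2.1 hy.2.1) (iff_of_true hx.2.2 hy.2.2)
    · rw [show (⟨3, by omega⟩ : Fin 5) = 3 from rfl, eS3]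
      intro x hx y hy hadj
      exact hpat x y hadj hx.1 hy.1 (iff_of_true hx.2.1 hy.2.1) (iff_of_false hx.2.2 hy.2.2)
    · rw [show (⟨4, by omega⟩ : Fin 5) = 4 from rfl, eS4]
      intro x hx y hy hadj
      exact hpat x y hadj hx.1 hy.1 (iff_of_false hx.2.1 hy.2.1) (iff_of_true hx.2.2 hy.2.2)
  obtain ⟨S, hS, hav⟩ := hMres Sets hSetsInd
  obtain ⟨u, v, huv, rfl⟩ := Finset.card_eq_two.mp hS.2
  have hadj : M.Adj u v := hS.1 (by simp) (by simp) huv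
  have hu : ∀ k, u ∉ Sets k := fun k => hav u (by simp) k
  have hv : ∀ k, v ∉ Sets k := fun k => hav v (by simp) k
  have hufree : free u := by
    intro j
    fin_cases j
    · exact fun hh => hu 0 (by rw [eS0]; exact hh)
    · exact fun hh => hu 1 (by rw [eS1]; exact hh)
  have hvfree : free v := by
    intro j
    fin_cases j
    · exact fun hh => hv 0 (by rw [eS0]; exact hh)
    · exact fun hh => hv 1 (by rw [eS1]; exact hh)
  have hnod : ∀ x, free x → (∀ k, x ∉ Sets k) → ¬ d 0 x ∧ ¬ d 1 x := by
    intro x hfree hnk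
    by_cases h0 : d 0 x <;> by_cases h1 : d 1 x
    · exact absurd (show x ∈ Sets 2 by rw [eS2]; exact ⟨hfree, h0, h1⟩) (hnk 2)
    · exact absurd (show x ∈ Sets 3 by rw [eS3]; exact ⟨hfree, h0, h1⟩) (hnk 3)
    · exact absurd (show x ∈ Sets 4 by rw [eS4]; exact ⟨hfree, h0, h1⟩) (hnk 4)
    · exact ⟨h0, h1⟩
  rcases lt_or_gt_of_ne hadj.ne with hlt | hlt
  · obtain ⟨j, hdj, _⟩ := master u v hadj hlt hufree hvfree
    have := hnod u hufree hu
    fin_cases j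
    · exact this.1 hdj
    · exact this.2 hdj
  · obtain ⟨j, hdj, _⟩ := master v u hadj.symm hlt hvfree hufree
    have := hnod v hvfree hv
    fin_cases j
    · exact this.1 hdj
    · exact this.2 hdj



lemma list_len (s p : ℕ) : (List.replicate s 2 ++ [p]).length = s + 1 := by simp

lemma list_get_lt {s p : ℕ} (i : Fin (List.replicate s 2 ++ [p]).length)
    (h : (i : ℕ) < s) : (List.replicate s 2 ++ [p]).get i = 2 := by
  rw [List.get_eq_getElem, List.getElem_append_left (by simpa using h),
    List.getElem_replicate]

lemma list_get_last {s p : ℕ} (i : Fin (List.replicate s 2 ++ [p]).length)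
    (h : (i : ℕ) = s) : (List.replicate s 2 ++ [p]).get i = p := by
  rw [List.get_eq_getElem, List.getElem_append_right (by simp [h])]
  simp [h]

lemma varrows_of_res {V : Type} [Fintype V] {G : SimpleGraph V} {s p : ℕ}
    (hres : Res G s p) : VArrows G (List.replicate s 2 ++ [p]) := by
  classical
  intro c
  have hlen : (List.replicate s 2 ++ [p]).length = s + 1 := list_len s p
  by_cases hedge : ∃ (i : Fin (List.replicate s 2 ++ [p]).length),
      (i : ℕ) < s ∧ ∃ x y, G.Adj x y ∧ c x = i ∧ c y = i
  · obtain ⟨i, hi, x, y, hadj, hcx, hcy⟩ := hedge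
    refine ⟨i, {x, y}, ?_, ?_⟩
    · intro v hv
      simp only [Finset.mem_insert, Finset.mem_singleton] at hv
      rcases hv with rfl | rfl <;> assumption
    · rw [list_get_lt i hi]
      constructor
      · intro u hu w hw hne
        simp only [Finset.coe_insert, Set.mem_insert_iff, Finset.coe_singleton,
          Set.mem_singleton_iff] at hu hw
        rcases hu with rfl | rfl <;> rcases hw with rfl | rfl <;>
          first
            | exact absurd rfl hne
            | exact hadj | exact hadj.symm
      · rw [Finset.card_insert_of_notMem (by simpa using hadj.ne), Finset.card_singleton]
  · push_neg at hedge
    obtain ⟨S, hS, hav⟩ := hres (fun j => {v | (c v : ℕ) = (j : ℕ)}) (by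
      intro j x hx y hy hadj
      simp only [Set.mem_setOf_eq] at hx hy
      have hjlt : ((c x : ℕ)) < s := by rw [hx]; exact j.isLt
      exact hedge (c x) hjlt x y hadj rfl (Fin.ext (by rw [hx, hy])))
    have hlast : ∀ v ∈ S, (c v : ℕ) = s := by
      intro v hv
      have h1 : (c v : ℕ) < s + 1 := by have := (c v).isLt; omega
      by_contra hne
      exact hav v hv ⟨(c v : ℕ), by omega⟩ (by simp)
    refine ⟨⟨s, by omega⟩, S, ?_, ?_⟩
    · intro v hv
      exact Fin.ext (hlast v hv)
    · rw [list_get_last _ rfl]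
      exact hS

lemma res_of_varrows {V : Type} [Fintype V] {G : SimpleGraph V} {s p : ℕ}
    (hva : VArrows G (List.replicate s 2 ++ [p])) : Res G s p := by
  classical
  intro I hI
  have hlen : (List.replicate s 2 ++ [p]).length = s + 1 := list_len s p
  let c : V → Fin (List.replicate s 2 ++ [p]).length := fun v =>
    if h : ∃ j, v ∈ I j then Fin.cast hlen.symm (Classical.choose h).castSucc
    else Fin.cast hlen.symm (Fin.last s)
  obtain ⟨i, S, hmono, hclique⟩ := hva c
  rcases Nat.lt_or_ge (i : ℕ) s with hi | hi
  · exfalso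
    rw [list_get_lt i hi] at hclique
    obtain ⟨x, y, hxy, rfl⟩ := Finset.card_eq_two.mp hclique.2
    have hadj : G.Adj x y := hclique.1 (by simp) (by simp) hxy
    have hmm : ∀ v : V, c v = i → ∃ j : Fin s, v ∈ I j ∧ ((j : ℕ) = (i : ℕ)) := by
      intro v hv
      by_cases h : ∃ j, v ∈ I j
      · refine ⟨Classical.choose h, Classical.choose_spec h, ?_⟩
        have : c v = Fin.cast hlen.symm (Classical.choose h).castSucc := by
          simp only [c, dif_pos h]
        rw [this] at hv
        have := congrArg Fin.val hv
        simpa using this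
      · exfalso
        have : c v = Fin.cast hlen.symm (Fin.last s) := by simp only [c, dif_neg h]
        rw [this] at hv
        have := congrArg Fin.val hv
        simp only [Fin.coe_cast, Fin.val_last] at this
        omega
    obtain ⟨j1, hj1, hv1⟩ := hmm x (hmono x (by simp))
    obtain ⟨j2, hj2, hv2⟩ := hmm y (hmono y (by simp))
    have hj : j1 = j2 := Fin.ext (by omega)
    subst hj
    exact hI j1 _ hj1 _ hj2 hadj
  · have hieq : (i : ℕ) = s := by have := i.isLt; omega
    rw [list_get_last i hieq] at hclique
    refine ⟨S, hclique, ?_⟩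
    intro v hv j hvj
    have hcv := hmono v hv
    have hex : ∃ j', v ∈ I j' := ⟨j, hvj⟩
    have : c v = Fin.cast hlen.symm (Classical.choose hex).castSucc := by
      simp only [c, dif_pos hex]
    rw [this] at hcv
    have := congrArg Fin.val hcv
    simp only [Fin.coe_cast, Fin.coe_castSucc] at this
    have := (Classical.choose hex).isLt
    omega

/-- size-tracked cone -/
lemma pk_cone {n s p q : ℕ} (hp : 1 ≤ p) (hq : 1 ≤ q) (h : Pk n s p q) :
    Pk (n + 1) (s + 1) p (q + 1) := by
  obtain ⟨G, hres, hcf⟩ := h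
  have hres' := res_cone hp hres
  have hcf1 : (⊥ : SimpleGraph (Fin 1)).CliqueFree (1 + 1) := cliqueFree_bot le_rfl
  have hcf2 : G.CliqueFree ((q - 1) + 1) := by
    have : q - 1 + 1 = q := by omega
    rw [this]; exact hcf
  have hcf' := joinG_cliqueFree hcf1 hcf2
  have heq : 1 + (q - 1) + 1 = q + 1 := by omega
  rw [heq] at hcf'
  have hcard : Fintype.card (Fin 1 ⊕ Fin n) = n + 1 := by
    simp [Fintype.card_sum, add_comm]
  exact pk_relabel _ hcard hres' hcf'

/-- shift graph package -/
lemma pk_sh (s : ℕ) : ∃ n, Pk n s 2 3 := by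
  refine ⟨_, pk_relabel (Sh (2 ^ (s + 1) + 1)) rfl (sh_res s) ?_⟩
  exact sh_cliqueFree _

lemma ex_22 : EX 2 2 := by
  obtain ⟨n, h⟩ := pk_sh 2
  exact ⟨n, h⟩

lemma ex_23 : EX 2 3 := by
  obtain ⟨m, M, hres, hcf⟩ := pk_sh 5
  refine ⟨_, pk_relabel (ApexG M) rfl (apex_res M hcf hres) (apex_cliqueFree M hcf)⟩

lemma ex_J1 {p : ℕ} (hp : 2 ≤ p) (h : EX 2 p) : EX 2 (p + 2) := by
  obtain ⟨n, G, hres, hcf⟩ := h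
  obtain ⟨mT, T, hTres, hTcf⟩ := pk_sh 2
  have hres' := res_join hTres hres
  have hcfG : G.CliqueFree (p + 1) := by
    have : p + 1 = 2 + p - 1 := by omega
    rw [this]; exact hcf
  have hcfT : T.CliqueFree (2 + 1) := hTcf
  have hcf' := joinG_cliqueFree hcfT hcfG
  have heq : 2 + p + 1 = 2 + (p + 2) - 1 := by omega
  rw [heq] at hcf'
  exact ⟨_, pk_relabel (joinG T G) rfl hres' hcf'⟩

lemma ex_cone {s p : ℕ} (hs : 1 ≤ s) (hp : 1 ≤ p) (h : EX s p) : EX (s + 1) p := by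
  obtain ⟨n, hpk⟩ := h
  have := pk_cone hp (by omega : 1 ≤ s + p - 1) hpk
  have heq : s + p - 1 + 1 = s + 1 + p - 1 := by omega
  rw [heq] at this
  exact ⟨n + 1, this⟩

lemma ex_2p : ∀ p, 2 ≤ p → EX 2 p := by
  have key : ∀ t, EX 2 (t + 2) ∧ EX 2 (t + 3) := by
    intro t
    induction t with
    | zero => exact ⟨ex_22, ex_23⟩
    | succ t ih =>
        refine ⟨ih.2, ?_⟩
        have := ex_J1 (by omega) ih.1
        have heq : t + 2 + 2 = t + 1 + 3 := by omega
        rw [heq] at this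
        exact this
  intro p hp
  have := (key (p - 2)).1
  have heq : p - 2 + 2 = p := by omega
  rw [heq] at this
  exact this

lemma ex_all : ∀ s p, 2 ≤ s → 2 ≤ p → EX s p := by
  intro s p hs hp
  induction s, hs using Nat.le_induction with
  | base => exact ex_2p p hp
  | succ s hs ih => exact ex_cone (by omega) (by omega) ih

end FolkAux


open FolkAux in
theorem Fv_twos_subadd (r s p : ℕ) (h2 : 2 ≤ s) (hsr : s ≤ r) (hp : 2 ≤ p) :
    Fv (List.replicate r 2 ++ [p]) (r + p - 1) ≤
      Fv (List.replicate s 2 ++ [p]) (s + p - 1) + (r - s) := by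
  classical
  set Ss : Set ℕ := {n : ℕ | ∃ G : SimpleGraph (Fin n),
    VArrows G (List.replicate s 2 ++ [p]) ∧ G.CliqueFree (s + p - 1)} with hSs
  have hne : Ss.Nonempty := by
    obtain ⟨n, G, hres, hcf⟩ := ex_all s p h2 hp
    exact ⟨n, G, varrows_of_res hres, hcf⟩
  set N := Fv (List.replicate s 2 ++ [p]) (s + p - 1) with hN
  have hmem : N ∈ Ss := Nat.sInf_mem hne
  obtain ⟨G₀, hva₀, hcf₀⟩ := hmem
  have hres₀ : Res G₀ s p := res_of_varrows hva₀
  have key : ∀ k, Pk (N + k) (s + k) p (s + p - 1 + k) := by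
    intro k
    induction k with
    | zero =>
        simp only [Nat.add_zero]
        exact ⟨G₀, hres₀, hcf₀⟩
    | succ k ih =>
        have := pk_cone (by omega : 1 ≤ p) (by omega : 1 ≤ s + p - 1 + k) ih
        have h1 : N + k + 1 = N + (k + 1) := by omega
        have h2 : s + k + 1 = s + (k + 1) := by omega
        have h3 : s + p - 1 + k + 1 = s + p - 1 + (k + 1) := by omega
        rw [h1, h2, h3] at this
        exact this
  obtain ⟨G₂, hres₂, hcf₂⟩ := key (r - s)
  have hsk : s + (r - s) = r := by omega
  have hqk : s + p - 1 + (r - s) = r + p - 1 := by omega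
  rw [hsk] at hres₂
  rw [hqk] at hcf₂
  have hmem2 : (N + (r - s)) ∈ {n : ℕ | ∃ G : SimpleGraph (Fin n),
      VArrows G (List.replicate r 2 ++ [p]) ∧ G.CliqueFree (r + p - 1)} :=
    ⟨G₂, varrows_of_res hres₂, hcf₂⟩
  exact Nat.sInf_le hmem2
end

section
/- Suppose r_0 > 2 attains the minimum of F_v(2_r, p; r+p−1) − r over r ≥ 2 and is the smallest such value, and G is an extremal graph in H(2_{r_0}, p; r_0 + p − 1). Then G →v (2, r_0 + p − 2), i.e. for every partition V(G) = V_1 ∪ V_2 with V_1 independent, V_2 contains an (r_0 + p − 2)-clique. -/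
open SimpleGraph

lemma two_le_get (r p : ℕ) (hp : 2 ≤ p) (i : Fin (List.replicate r 2 ++ [p]).length) :
    2 ≤ (List.replicate r 2 ++ [p]).get i := by
  have h : (List.replicate r 2 ++ [p]).get i ∈ List.replicate r 2 ++ [p] := by
    rw [List.get_eq_getElem]; exact List.getElem_mem i.isLt
  rcases List.mem_append.1 h with h | h
  · rw [List.eq_of_mem_replicate h]
  · simp only [List.mem_singleton] at h; omega

lemma get_replicate_append (r p : ℕ) (i : Fin (List.replicate r 2 ++ [p]).length) :
    (List.replicate r 2 ++ [p]).get i = if (i : ℕ) < r then 2 else p := by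
  have hi := i.isLt
  simp only [List.length_append, List.length_replicate, List.length_singleton] at hi
  rcases lt_or_ge (i : ℕ) r with h | h
  · rw [List.get_eq_getElem, List.getElem_append_left (by simpa using h)]
    simp [h]
  · have hieq : (i : ℕ) = r := by omega
    rw [List.get_eq_getElem, List.getElem_append_right (by simpa using h)]
    simp [hieq, h, Nat.not_lt.2 h]

lemma fv_le_card {V : Type} [Fintype V] (G : SimpleGraph V) (a : List ℕ) (q : ℕ)
    (h1 : VArrows G a) (h2 : G.CliqueFree q) : Fv a q ≤ Fintype.card V := by
  apply Nat.sInf_le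
  set e := Fintype.equivFin V
  refine ⟨SimpleGraph.comap (e.symm : Fin (Fintype.card V) → V) G, ?_, ?_⟩
  · intro c
    obtain ⟨i, S, hc, hcl⟩ := h1 (fun u => c (e u))
    refine ⟨i, S.map e.toEmbedding, ?_, ?_, ?_⟩
    · intro z hz
      obtain ⟨w, hw, rfl⟩ := Finset.mem_map.1 hz
      exact hc w hw
    · intro x hx y hy hxy
      simp only [Finset.coe_map, Set.mem_image, Finset.mem_coe] at hx hy
      obtain ⟨x', hx', rfl⟩ := hx
      obtain ⟨y', hy', rfl⟩ := hy
      have hne : x' ≠ y' := fun h => hxy (by rw [h])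
      have h := hcl.isClique hx' hy' hne
      show G.Adj (e.symm (e x')) (e.symm (e y'))
      simpa using h
    · rw [Finset.card_map]; exact hcl.card_eq
  · intro T hT
    refine h2 (T.map e.symm.toEmbedding) ⟨?_, ?_⟩
    · intro x hx y hy hxy
      simp only [Finset.coe_map, Set.mem_image, Finset.mem_coe] at hx hy
      obtain ⟨x', hx', rfl⟩ := hx
      obtain ⟨y', hy', rfl⟩ := hy
      have hne : x' ≠ y' := fun h => hxy (by rw [h])
      exact hT.isClique hx' hy' hne
    · rw [Finset.card_map]; exact hT.card_eq

theorem extremal_arrows (p r₀ : ℕ) (hp : 2 ≤ p) (hr₀ : 2 < r₀)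
    (hmin : ∀ r, 2 ≤ r →
      Fv (List.replicate r₀ 2 ++ [p]) (r₀ + p - 1) + r ≤
        Fv (List.replicate r 2 ++ [p]) (r + p - 1) + r₀)
    (hleast : ∀ r, 2 ≤ r → r < r₀ →
      Fv (List.replicate r₀ 2 ++ [p]) (r₀ + p - 1) + r <
        Fv (List.replicate r 2 ++ [p]) (r + p - 1) + r₀)
    {V : Type} [Fintype V] (G : SimpleGraph V)
    (hG₁ : VArrows G (List.replicate r₀ 2 ++ [p]))
    (hG₂ : G.CliqueFree (r₀ + p - 1))
    (hext : Fintype.card V = Fv (List.replicate r₀ 2 ++ [p]) (r₀ + p - 1)) :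
    VArrows G [2, r₀ + p - 2] := by
  classical
  intro c
  by_contra hbadex
  push_neg at hbadex
  have hbad : ∀ (i : Fin ([2, r₀ + p - 2] : List ℕ).length) (S : Finset V),
      (∀ v ∈ S, c v = i) → ¬ G.IsNClique (([2, r₀ + p - 2] : List ℕ).get i) S :=
    hbadex
  have fin2 : ∀ j : Fin 2, j = ⟨0, by norm_num⟩ ∨ j = ⟨1, by norm_num⟩ := by decide
  -- independence of color class 0
  have hind : ∀ u w : V, c u = ⟨0, by norm_num⟩ → c w = ⟨0, by norm_num⟩ → ¬ G.Adj u w := by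
    intro u w hu hw hadj
    have hne : u ≠ w := G.ne_of_adj hadj
    refine hbad ⟨0, by norm_num⟩ {u, w} ?_ ?_
    · intro z hz
      rcases Finset.mem_insert.1 hz with rfl | hz
      · exact hu
      · rw [Finset.mem_singleton.1 hz]; exact hw
    · constructor
      · intro x hx y hy hxy
        simp only [Finset.coe_insert, Set.mem_insert_iff, Finset.coe_singleton,
          Set.mem_singleton_iff] at hx hy
        rcases hx with rfl | rfl <;> rcases hy with rfl | rfl
        · exact absurd rfl hxy
        · exact hadj
        · exact hadj.symm
        · exact absurd rfl hxy
      · show ({u, w} : Finset V).card = 2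
        rw [Finset.card_insert_of_notMem (by simp [hne]), Finset.card_singleton]
  -- V is nonempty
  have hne : Nonempty V := by
    by_contra hemp
    rw [not_nonempty_iff] at hemp
    obtain ⟨i, S, -, hcl⟩ := hG₁ (fun u => (hemp.elim u))
    have hS : S = ∅ := Finset.eq_empty_of_isEmpty S
    have h2 := two_le_get r₀ p hp i
    rw [hS, isNClique_empty] at hcl
    omega
  obtain ⟨v, hv⟩ : ∃ v : V, c v = ⟨0, by norm_num⟩ ∨ ∀ u : V, c u ≠ ⟨0, by norm_num⟩ := by
    by_cases h : ∃ u : V, c u = ⟨0, by norm_num⟩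
    · obtain ⟨u, hu⟩ := h; exact ⟨u, Or.inl hu⟩
    · push_neg at h
      exact ⟨Classical.arbitrary V, Or.inr h⟩
  set P : V → Prop := fun u => c u = ⟨1, by norm_num⟩ ∧ u ≠ v with hPdef
  set G' : SimpleGraph {u : V // P u} :=
    SimpleGraph.comap (Subtype.val : {u : V // P u} → V) G with hG'def
  have hlen₁ : (List.replicate (r₀ - 1) 2 ++ [p]).length = r₀ := by
    simp only [List.length_append, List.length_replicate, List.length_singleton]; omega
  have hlen₀ : (List.replicate r₀ 2 ++ [p]).length = r₀ + 1 := by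
    simp only [List.length_append, List.length_replicate, List.length_singleton]
  have hcases : ∀ z : V, ¬ P z → c z = ⟨0, by norm_num⟩ ∨ z = v := by
    intro z hz
    by_cases h1 : z = v
    · exact Or.inr h1
    · left
      have h2 : ¬ (c z = ⟨1, by norm_num⟩) := fun hc1 => hz ⟨hc1, h1⟩
      rcases fin2 (c z) with h | h
      · exact h
      · exact absurd h h2
  have hkill : ∀ z w : V, G.Adj z w →
      (c z = ⟨0, by norm_num⟩ ∨ z = v) → (c w = ⟨0, by norm_num⟩ ∨ w = v) → False := by
    intro z w hadj hz hw
    rcases hz with hz | rfl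
    · rcases hw with hw | rfl
      · exact hind z w hz hw hadj
      · rcases hv with hv | hv
        · exact hind z w hz hv hadj
        · exact hv z hz
    · rcases hw with hw | rfl
      · rcases hv with hv | hv
        · exact hind z w hv hw hadj
        · exact hv w hw
      · exact G.ne_of_adj hadj rfl
  -- G' arrows the smaller list
  have h1 : VArrows G' (List.replicate (r₀ - 1) 2 ++ [p]) := by
    intro c'
    have hcb : ∀ x : {u : V // P u}, ((c' x : ℕ)) < r₀ := by
      intro x
      have h := (c' x).isLt
      omega
    set cc : V → Fin (List.replicate r₀ 2 ++ [p]).length := fun u =>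
      if h : P u then
        if h' : ((c' ⟨u, h⟩ : ℕ)) < r₀ - 1 then ⟨(c' ⟨u, h⟩ : ℕ), by rw [hlen₀]; omega⟩
        else ⟨r₀, by rw [hlen₀]; omega⟩
      else ⟨r₀ - 1, by rw [hlen₀]; omega⟩ with hccdef
    obtain ⟨i, S, hSc, hScl⟩ := hG₁ cc
    have hival : (i : ℕ) < r₀ + 1 := by have h := i.isLt; omega
    by_cases hA : (i : ℕ) = r₀ - 1
    · -- class of the fresh color : would be an edge inside V₁ ∪ {v}
      exfalso
      have hg : (List.replicate r₀ 2 ++ [p]).get i = 2 := by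
        rw [get_replicate_append, if_pos (by omega)]
      rw [hg] at hScl
      obtain ⟨x, y, hxy, hSxy⟩ := Finset.card_eq_two.1 hScl.card_eq
      have hadj : G.Adj x y := hScl.isClique (by simp [hSxy]) (by simp [hSxy]) hxy
      have hnP : ∀ z : V, z ∈ S → ¬ P z := by
        intro z hz hPz
        have hval : (cc z : ℕ) = (i : ℕ) := by rw [hSc z hz]
        simp only [hccdef, dif_pos hPz] at hval
        split_ifs at hval with h'
        · simp only [Fin.val_mk] at hval; omega
        · simp only [Fin.val_mk] at hval; omega
      exact hkill x y hadj (hcases x (hnP x (by simp [hSxy]))) (hcases y (hnP y (by simp [hSxy])))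
    · -- all vertices of the class are in W
      have hPz : ∀ z ∈ S, P z := by
        intro z hz
        by_contra h
        have hval : (cc z : ℕ) = (i : ℕ) := by rw [hSc z hz]
        simp only [hccdef, dif_neg h, Fin.val_mk] at hval
        omega
      set f : {x // x ∈ S} → {u : V // P u} := fun x => ⟨x.1, hPz x.1 x.2⟩ with hfdef
      have hfinj : Function.Injective f := by
        intro a b hab
        have h := congrArg Subtype.val hab
        simp only [hfdef] at h
        exact Subtype.ext h
      set S' : Finset {u : V // P u} := S.attach.map ⟨f, hfinj⟩ with hS'def
      have hmem : ∀ z : {u : V // P u}, z ∈ S' → (z : V) ∈ S := by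
        intro z hz
        obtain ⟨x, hx, rfl⟩ := Finset.mem_map.1 hz
        exact x.2
      have hmem' : ∀ z : V, z ∈ S → ∀ h : P z, (⟨z, h⟩ : {u : V // P u}) ∈ S' := by
        intro z hz h
        exact Finset.mem_map.2 ⟨⟨z, hz⟩, Finset.mem_attach _ _, rfl⟩
      have hcard : S'.card = S.card := by rw [Finset.card_map, Finset.card_attach]
      have hclique' : G'.IsClique ↑S' := by
        intro x hx y hy hxy
        have h := hScl.isClique (Finset.mem_coe.2 (hmem x (Finset.mem_coe.1 hx)))
          (Finset.mem_coe.2 (hmem y (Finset.mem_coe.1 hy)))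
          (fun h => hxy (Subtype.ext h))
        exact h
      have hval : ∀ z : {u : V // P u}, (z : V) ∈ S → (cc (z : V) : ℕ) = (i : ℕ) := by
        intro z hz
        rw [hSc _ hz]
      rcases lt_or_ge (i : ℕ) (r₀ - 1) with hlt | hge
      · refine ⟨⟨(i : ℕ), by rw [hlen₁]; omega⟩, S', ?_, ?_, ?_⟩
        · intro z hz
          have hzS := hmem z hz
          have hv' := hval z hzS
          simp only [hccdef, dif_pos z.2, Subtype.coe_eta] at hv'
          split_ifs at hv' with h'
          · simp only [Fin.val_mk] at hv'
            apply Fin.ext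
            simpa using hv'
          · exfalso
            simp only [Fin.val_mk] at hv'
            omega
        · exact hclique'
        · have hg₀ : (List.replicate r₀ 2 ++ [p]).get i = 2 := by
            rw [get_replicate_append, if_pos (by omega)]
          rw [hcard, hScl.card_eq, hg₀]
          rw [get_replicate_append, if_pos (by simpa using hlt)]
      · have hieq : (i : ℕ) = r₀ := by omega
        refine ⟨⟨r₀ - 1, by rw [hlen₁]; omega⟩, S', ?_, ?_, ?_⟩
        · intro z hz
          have hzS := hmem z hz
          have hv' := hval z hzS
          simp only [hccdef, dif_pos z.2, Subtype.coe_eta] at hv'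
          split_ifs at hv' with h'
          · exfalso
            simp only [Fin.val_mk] at hv'
            omega
          · apply Fin.ext
            have h2 := hcb z
            simp only [Fin.val_mk]
            omega
        · exact hclique'
        · rw [get_replicate_append, if_neg (by simp)]
          have hg₀ : (List.replicate r₀ 2 ++ [p]).get i = p := by
            rw [get_replicate_append, if_neg (by omega)]
          rw [hcard, hScl.card_eq, hg₀]
  -- G' is clique free
  have h2 : G'.CliqueFree (r₀ + p - 2) := by
    intro T hT
    refine hbad ⟨1, by norm_num⟩ (T.map (Function.Embedding.subtype P)) ?_ ?_
    · intro z hz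
      obtain ⟨w, hw, rfl⟩ := Finset.mem_map.1 hz
      exact w.2.1
    · constructor
      · intro x hx y hy hxy
        simp only [Finset.coe_map, Set.mem_image, Finset.mem_coe] at hx hy
        obtain ⟨x', hx', rfl⟩ := hx
        obtain ⟨y', hy', rfl⟩ := hy
        have hne' : x' ≠ y' := fun h => hxy (by rw [h])
        exact hT.isClique hx' hy' hne'
      · rw [Finset.card_map, hT.card_eq]
        rfl
  have hle : Fv (List.replicate (r₀ - 1) 2 ++ [p]) (r₀ + p - 2) ≤
      Fintype.card {u : V // P u} := fv_le_card G' _ _ h1 h2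
  have hltc : Fintype.card {u : V // P u} < Fintype.card V := by
    apply Fintype.card_subtype_lt (x := v)
    simp [hPdef]
  have hL := hleast (r₀ - 1) (by omega) (by omega)
  rw [show r₀ - 1 + p - 1 = r₀ + p - 2 from by omega] at hL
  rw [hext] at hltc
  omega
end

section
/- Let m, m_0, p, q be positive integers with m ≥ m_0 and q > min{m_0, p}. Then F̃_v(m; p; m − m_0 + q) ≤ F̃_v(m_0; p; q) + m − m_0. -/
open SimpleGraph

/-- `G →v [m]^p` : `G` arrows every tuple of positive integers with
`Σ(a_i - 1) + 1 = m` and all entries at most `p`. -/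
def VArrowsUni (m p : ℕ) {V : Type} [Fintype V] (G : SimpleGraph V) : Prop :=
  ∀ a : List ℕ, a ≠ [] → (∀ x ∈ a, 0 < x) → (a.map (· - 1)).sum + 1 = m →
    (∀ x ∈ a, x ≤ p) → VArrows G a

/-- The number `F̃_v(m; p; q)`. -/
noncomputable def Fvt (m p q : ℕ) : ℕ :=
  sInf {n : ℕ | ∃ G : SimpleGraph (Fin n), VArrowsUni m p G ∧ G.CliqueFree q}


variable {VY VC : Type}

abbrev KerV (r : ℕ) (VY VC : Type) : Type :=
  (Fin r × VY) ⊕ ({f : VC → Fin r // Function.Injective f} × VC)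

def Ker (r : ℕ) (GY : SimpleGraph VY) (GC : SimpleGraph VC) :
    SimpleGraph (KerV r VY VC) where
  Adj x y :=
    match x, y with
    | .inl (i, y1), .inl (i', y2) => i = i' ∧ GY.Adj y1 y2
    | .inl (i, _), .inr (T, u) => T.1 u = i
    | .inr (T, u), .inl (i, _) => T.1 u = i
    | .inr (T, u), .inr (T', u') => T = T' ∧ GC.Adj u u'
  symm := by
    constructor
    rintro (⟨i, y1⟩ | ⟨T, u⟩) (⟨i', y2⟩ | ⟨T', u'⟩) h
    · exact ⟨h.1.symm, GY.adj_symm h.2⟩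
    · exact h
    · exact h
    · exact ⟨h.1.symm, GC.adj_symm h.2⟩
  loopless := by
    constructor
    rintro (⟨i, y⟩ | ⟨T, u⟩) h
    · exact GY.loopless.irrefl y h.2
    · exact GC.loopless.irrefl u h.2

@[simp] lemma ker_adj_inl_inl {r : ℕ} {GY : SimpleGraph VY} {GC : SimpleGraph VC}
    {i i' : Fin r} {y1 y2 : VY} :
    (Ker r GY GC).Adj (.inl (i, y1)) (.inl (i', y2)) ↔ i = i' ∧ GY.Adj y1 y2 := Iff.rfl

@[simp] lemma ker_adj_inl_inr {r : ℕ} {GY : SimpleGraph VY} {GC : SimpleGraph VC}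
    {i : Fin r} {y : VY} {T} {u : VC} :
    (Ker r GY GC).Adj (.inl (i, y)) (.inr (T, u)) ↔ T.1 u = i := Iff.rfl

@[simp] lemma ker_adj_inr_inl {r : ℕ} {GY : SimpleGraph VY} {GC : SimpleGraph VC}
    {i : Fin r} {y : VY} {T} {u : VC} :
    (Ker r GY GC).Adj (.inr (T, u)) (.inl (i, y)) ↔ T.1 u = i := Iff.rfl

@[simp] lemma ker_adj_inr_inr {r : ℕ} {GY : SimpleGraph VY} {GC : SimpleGraph VC}
    {T T'} {u u' : VC} :
    (Ker r GY GC).Adj (.inr (T, u)) (.inr (T', u')) ↔ T = T' ∧ GC.Adj u u' := Iff.rfl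

lemma clique_card_lt {V : Type} {G : SimpleGraph V} {n : ℕ} (h : G.CliqueFree n)
    {S : Finset V} (hS : G.IsClique (S : Set V)) : S.card < n := by
  by_contra hle
  push_neg at hle
  obtain ⟨T, hTS, hTcard⟩ := Finset.exists_subset_card_eq hle
  exact h T ⟨hS.subset (Finset.coe_subset.mpr hTS), hTcard⟩

lemma ker_cliqueFree {r p : ℕ} {GY : SimpleGraph VY} {GC : SimpleGraph VC}
    (hY : GY.CliqueFree (p + 1)) (hC : GC.CliqueFree (p + 2)) :
    (Ker r GY GC).CliqueFree (p + 2) := by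
  classical
  intro S hS
  obtain ⟨hclq, hcard⟩ := hS
  by_cases hB2 : ∃ T u u', Sum.inr (T, u) ∈ S ∧ Sum.inr (T, u') ∈ S ∧ u ≠ u'
  · -- at least two right vertices (they must share the same T by adjacency)
    obtain ⟨T₀, u₀, u₁, hu₀, hu₁, hne⟩ := hB2
    -- no left vertices
    have hnoleft : ∀ i y, Sum.inl (i, y) ∉ S := by
      rintro i y hmem
      have h₀ : (Ker r GY GC).Adj (.inl (i, y)) (.inr (T₀, u₀)) :=
        hclq hmem hu₀ (by simp)
      have h₁ : (Ker r GY GC).Adj (.inl (i, y)) (.inr (T₀, u₁)) :=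
        hclq hmem hu₁ (by simp)
      rw [ker_adj_inl_inr] at h₀ h₁
      exact hne (T₀.2 (h₀.trans h₁.symm))
    -- all right vertices have T = T₀
    have hsameT : ∀ T u, Sum.inr (T, u) ∈ S → T = T₀ := by
      rintro T u hmem
      by_cases he : (Sum.inr (T, u) : KerV r VY VC) = Sum.inr (T₀, u₀)
      · have h := Sum.inr.inj he
        exact (Prod.ext_iff.mp h).1
      · have h := hclq hmem hu₀ he
        rw [ker_adj_inr_inr] at h
        exact h.1
    -- project to VC
    set proj : KerV r VY VC → VC := Sum.elim (fun _ => u₀) (fun x => x.2) with hproj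
    have hinj : Set.InjOn proj (S : Set (KerV r VY VC)) := by
      rintro (⟨i, y⟩ | ⟨T, u⟩) hx (⟨i', y'⟩ | ⟨T', u'⟩) hy hxy
      · exact absurd (Finset.mem_coe.mp hx) (hnoleft _ _)
      · exact absurd (Finset.mem_coe.mp hx) (hnoleft _ _)
      · exact absurd (Finset.mem_coe.mp hy) (hnoleft _ _)
      · simp only [hproj, Sum.elim_inr] at hxy
        rw [hsameT T u (Finset.mem_coe.mp hx), hsameT T' u' (Finset.mem_coe.mp hy), hxy]
    have himgclq : GC.IsClique ((S.image proj : Finset VC) : Set VC) := by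
      intro x hx y hy hxy
      simp only [Finset.coe_image, Set.mem_image, Finset.mem_coe] at hx hy
      obtain ⟨a, ha, rfl⟩ := hx
      obtain ⟨b, hb, rfl⟩ := hy
      have hab : a ≠ b := fun h => hxy (by rw [h])
      have hadj := hclq (Finset.mem_coe.mpr ha) (Finset.mem_coe.mpr hb) hab
      rcases a with (⟨i, y⟩ | ⟨T, u⟩)
      · exact absurd ha (hnoleft _ _)
      rcases b with (⟨i', y'⟩ | ⟨T', u'⟩)
      · exact absurd hb (hnoleft _ _)
      rw [ker_adj_inr_inr] at hadj
      exact hadj.2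
    have hlt := clique_card_lt hC himgclq
    rw [Finset.card_image_of_injOn hinj, hcard] at hlt
    exact lt_irrefl _ hlt
  · -- at most one right vertex: the lefts form a clique of size ≥ p+1 in one copy of Y
    push_neg at hB2
    -- find the set of left vertices; it has card ≥ p+1
    by_cases hR : ∃ T u, Sum.inr (T, u) ∈ S
    · obtain ⟨T₀, u₀, hu₀⟩ := hR
      have hrightuniq : ∀ x ∈ S, x.isRight → x = Sum.inr (T₀, u₀) := by
        rintro (⟨i, y⟩ | ⟨T, u⟩) hx h
        · simp at h
        · by_cases he : (Sum.inr (T, u) : KerV r VY VC) = Sum.inr (T₀, u₀)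
          · exact he
          · have hadj := hclq hx hu₀ he
            rw [ker_adj_inr_inr] at hadj
            obtain ⟨rfl, hadj2⟩ := hadj
            exact absurd (hB2 T u u₀ hx hu₀) (GC.ne_of_adj hadj2)
      -- S' := S minus the right vertex : all lefts, card p+1
      set S' := S.erase (Sum.inr (T₀, u₀)) with hS'
      have hcard' : S'.card = p + 1 := by
        rw [hS', Finset.card_erase_of_mem hu₀, hcard]; omega
      have hleft : ∀ x ∈ S', x.isLeft := by
        rintro (⟨i, y⟩ | ⟨T, u⟩) hx
        · simp
        · exact absurd (hrightuniq _ (Finset.mem_of_mem_erase hx) (by simp))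
            (Finset.ne_of_mem_erase hx)
      have hne' : S'.Nonempty := Finset.card_pos.mp (by omega)
      obtain ⟨a₀, ha₀⟩ := hne'
      rcases a₀ with (⟨i₀, y₀⟩ | w)
      swap
      · exact absurd (hleft _ ha₀) (by simp)
      set proj : KerV r VY VC → VY := Sum.elim (fun x => x.2) (fun _ => y₀) with hproj
      have hinj : Set.InjOn proj (S' : Set (KerV r VY VC)) := by
        rintro (⟨i, y⟩ | w) hx (⟨i', y'⟩ | w') hy hxy
        · simp only [hproj, Sum.elim_inl] at hxy
          subst hxy
          by_cases he : (Sum.inl (i, y) : KerV r VY VC) = Sum.inl (i', y)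
          · exact he
          · have hadj := hclq (Finset.mem_of_mem_erase (Finset.mem_coe.mp hx))
              (Finset.mem_of_mem_erase (Finset.mem_coe.mp hy)) he
            rw [ker_adj_inl_inl] at hadj
            exact absurd hadj.2 (GY.loopless.irrefl y)
        · exact absurd (hleft _ (Finset.mem_coe.mp hy)) (by simp)
        · exact absurd (hleft _ (Finset.mem_coe.mp hx)) (by simp)
        · exact absurd (hleft _ (Finset.mem_coe.mp hx)) (by simp)
      have himgclq : GY.IsClique ((S'.image proj : Finset VY) : Set VY) := by
        intro x hx y hy hxy
        simp only [Finset.coe_image, Set.mem_image, Finset.mem_coe] at hx hy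
        obtain ⟨a, ha, rfl⟩ := hx
        obtain ⟨b, hb, rfl⟩ := hy
        have hab : a ≠ b := fun h => hxy (by rw [h])
        have hadj := hclq (Finset.mem_of_mem_erase ha) (Finset.mem_of_mem_erase hb) hab
        rcases a with (⟨i, y⟩ | w)
        swap
        · exact absurd (hleft _ ha) (by simp)
        rcases b with (⟨i', y'⟩ | w')
        swap
        · exact absurd (hleft _ hb) (by simp)
        rw [ker_adj_inl_inl] at hadj
        exact hadj.2
      have hlt := clique_card_lt hY himgclq
      rw [Finset.card_image_of_injOn hinj, hcard'] at hlt
      exact lt_irrefl _ hlt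
    · -- no right vertices at all : all of S is left, clique of card p+2 in Y
      push_neg at hR
      have hleft : ∀ x ∈ S, x.isLeft := by
        intro x hx
        rcases x with (⟨i, y⟩ | ⟨T, u⟩)
        · simp
        · exact absurd hx (hR T u)
      have hne' : S.Nonempty := Finset.card_pos.mp (by omega)
      obtain ⟨a₀, ha₀⟩ := hne'
      rcases a₀ with (⟨i₀, y₀⟩ | w)
      swap
      · exact absurd (hleft _ ha₀) (by simp)
      set proj : KerV r VY VC → VY := Sum.elim (fun x => x.2) (fun _ => y₀) with hproj
      have hinj : Set.InjOn proj (S : Set (KerV r VY VC)) := by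
        rintro (⟨i, y⟩ | w) hx (⟨i', y'⟩ | w') hy hxy
        · simp only [hproj, Sum.elim_inl] at hxy
          subst hxy
          by_cases he : (Sum.inl (i, y) : KerV r VY VC) = Sum.inl (i', y)
          · exact he
          · have hadj := hclq (Finset.mem_coe.mp hx) (Finset.mem_coe.mp hy) he
            rw [ker_adj_inl_inl] at hadj
            exact absurd hadj.2 (GY.loopless.irrefl y)
        · exact absurd (hleft _ (Finset.mem_coe.mp hy)) (by simp)
        · exact absurd (hleft _ (Finset.mem_coe.mp hx)) (by simp)
        · exact absurd (hleft _ (Finset.mem_coe.mp hx)) (by simp)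
      have himgclq : GY.IsClique ((S.image proj : Finset VY) : Set VY) := by
        intro x hx y hy hxy
        simp only [Finset.coe_image, Set.mem_image, Finset.mem_coe] at hx hy
        obtain ⟨a, ha, rfl⟩ := hx
        obtain ⟨b, hb, rfl⟩ := hy
        have hab : a ≠ b := fun h => hxy (by rw [h])
        have hadj := hclq ha hb hab
        rcases a with (⟨i, y⟩ | w)
        swap
        · exact absurd (hleft _ ha) (by simp)
        rcases b with (⟨i', y'⟩ | w')
        swap
        · exact absurd (hleft _ hb) (by simp)
        rw [ker_adj_inl_inl] at hadj
        exact hadj.2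
      have hlt := clique_card_lt hY himgclq
      rw [Finset.card_image_of_injOn hinj, hcard] at hlt
      omega

lemma ker_arrow {r p k : ℕ} [Fintype VC] {GY : SimpleGraph VY} {GC : SimpleGraph VC}
    (hr : (k + 1) * (Fintype.card VC - 1) < r)
    (hYarr : ∀ c : VY → Fin (k + 1), ∃ S : Finset VY,
      GY.IsNClique p S ∧ ∀ v ∈ S, ∀ w ∈ S, c v = c w)
    (hCarr : ∀ c : VC → Fin k, ∃ S : Finset VC,
      GC.IsNClique (p + 1) S ∧ ∀ v ∈ S, ∀ w ∈ S, c v = c w) :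
    ∀ c : KerV r VY VC → Fin (k + 1), ∃ S : Finset (KerV r VY VC),
      (Ker r GY GC).IsNClique (p + 1) S ∧ ∀ v ∈ S, ∀ w ∈ S, c v = c w := by
  classical
  intro c
  -- in each copy of Y find a monochromatic p-clique
  have hY := fun i : Fin r => hYarr (fun y => c (Sum.inl (i, y)))
  choose SY hSY hmono using hY
  set jcol : Fin r → Fin (k + 1) :=
    fun i => if h : (SY i).Nonempty then c (Sum.inl (i, h.choose)) else 0 with hjcoldef
  have hjcol : ∀ i, ∀ y ∈ SY i, c (Sum.inl (i, y)) = jcol i := by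
    intro i y hy
    have hne : (SY i).Nonempty := ⟨y, hy⟩
    simp only [hjcoldef, dif_pos hne]
    exact hmono i y hy hne.choose hne.choose_spec
  -- pigeonhole: some color j has ≥ card VC copies
  have hmaps : ∀ i ∈ (Finset.univ : Finset (Fin r)),
      jcol i ∈ (Finset.univ : Finset (Fin (k + 1))) := fun _ _ => Finset.mem_univ _
  have hcount : (Finset.univ : Finset (Fin (k + 1))).card * (Fintype.card VC - 1) <
      (Finset.univ : Finset (Fin r)).card := by simpa using hr
  obtain ⟨j, -, hj⟩ := Finset.exists_lt_card_fiber_of_mul_lt_card_of_maps_to hmaps hcount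
  have hj' : Fintype.card VC ≤ (Finset.univ.filter (fun i => jcol i = j)).card := by omega
  obtain ⟨F, hF, hFcard⟩ := Finset.exists_subset_card_eq hj'
  set eC := Fintype.equivFin VC
  set oiso := F.orderIsoOfFin hFcard
  set τ : VC → Fin r := fun u => (oiso (eC u) : Fin r) with hτdef
  have hτinj : Function.Injective τ := by
    intro u u' h
    apply eC.injective
    apply oiso.injective
    exact Subtype.ext h
  have hτmem : ∀ u, jcol (τ u) = j := by
    intro u
    have : τ u ∈ F := (oiso (eC u)).2
    exact (Finset.mem_filter.mp (hF this)).2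
  set T : {f : VC → Fin r // Function.Injective f} := ⟨τ, hτinj⟩ with hTdef
  by_cases hx : ∃ u : VC, c (Sum.inr (T, u)) = j
  · obtain ⟨u, hu⟩ := hx
    have hD := hSY (τ u)
    refine ⟨insert (Sum.inr (T, u))
      ((SY (τ u)).image (fun y => (Sum.inl (τ u, y) : KerV r VY VC))), ⟨?_, ?_⟩, ?_⟩
    · -- clique
      intro x hx' y hy' hxy
      simp only [Finset.coe_insert, Set.mem_insert_iff, Finset.coe_image, Set.mem_image,
        Finset.mem_coe] at hx' hy'
      rcases hx' with rfl | ⟨a, ha, rfl⟩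
      · rcases hy' with rfl | ⟨b, hb, rfl⟩
        · exact absurd rfl hxy
        · rw [ker_adj_inr_inl]
      · rcases hy' with rfl | ⟨b, hb, rfl⟩
        · rw [ker_adj_inl_inr]
        · have hab : a ≠ b := by
            intro h; exact hxy (by rw [h])
          exact ⟨rfl, hD.1 ha hb hab⟩
    · -- card
      have hinj : Function.Injective (fun y => (Sum.inl (τ u, y) : KerV r VY VC)) := by
        intro a b h
        exact (Prod.ext_iff.mp (Sum.inl.inj h)).2
      rw [Finset.card_insert_of_notMem (by simp), Finset.card_image_of_injective _ hinj,
        hD.2]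
    · -- mono
      have hcol : ∀ v ∈ insert (Sum.inr (T, u))
          ((SY (τ u)).image (fun y => (Sum.inl (τ u, y) : KerV r VY VC))), c v = j := by
        intro v hv
        rcases Finset.mem_insert.mp hv with rfl | hv'
        · exact hu
        · obtain ⟨b, hb, rfl⟩ := Finset.mem_image.mp hv'
          rw [hjcol (τ u) b hb, hτmem]
      intro v hv w hw
      rw [hcol v hv, hcol w hw]
  · push_neg at hx
    set c' : VC → Fin k := fun u => (Fin.exists_succAbove_eq (hx u)).choose with hc'def
    have hc' : ∀ u, j.succAbove (c' u) = c (Sum.inr (T, u)) :=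
      fun u => (Fin.exists_succAbove_eq (hx u)).choose_spec
    obtain ⟨S', hS'clq, hS'mono⟩ := hCarr c'
    refine ⟨S'.image (fun u => (Sum.inr (T, u) : KerV r VY VC)), ⟨?_, ?_⟩, ?_⟩
    · intro x hx' y hy' hxy
      simp only [Finset.coe_image, Set.mem_image, Finset.mem_coe] at hx' hy'
      obtain ⟨a, ha, rfl⟩ := hx'
      obtain ⟨b, hb, rfl⟩ := hy'
      have hab : a ≠ b := by intro h; exact hxy (by rw [h])
      exact ⟨rfl, hS'clq.1 ha hb hab⟩
    · have hinj : Function.Injective (fun u => (Sum.inr (T, u) : KerV r VY VC)) := by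
        intro a b h
        exact (Prod.ext_iff.mp (Sum.inr.inj h)).2
      rw [Finset.card_image_of_injective _ hinj, hS'clq.2]
    · intro v hv w hw
      obtain ⟨a, ha, rfl⟩ := Finset.mem_image.mp hv
      obtain ⟨b, hb, rfl⟩ := Finset.mem_image.mp hw
      rw [← hc' a, ← hc' b, hS'mono a ha b hb]

lemma kernel_exists : ∀ p k : ℕ, ∃ (V : Type) (_ : Fintype V) (G : SimpleGraph V),
    G.CliqueFree (p + 1) ∧
    ∀ c : V → Fin k, ∃ S : Finset V, G.IsNClique p S ∧ ∀ v ∈ S, ∀ w ∈ S, c v = c w := by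
  intro p
  induction p with
  | zero =>
    intro k
    refine ⟨Empty, inferInstance, ⊥, ?_, ?_⟩
    · intro S hS
      have h1 : S.card = 1 := hS.2
      obtain ⟨x, -⟩ := Finset.card_pos.mp (show 0 < S.card by omega)
      exact x.elim
    · intro c
      exact ⟨∅, ⟨by simp, by simp⟩, by simp⟩
  | succ p ihp =>
    intro k
    induction k with
    | zero =>
      refine ⟨Fin (p + 1), inferInstance, ⊤, ?_, ?_⟩
      · intro S hS
        have h1 : S.card = p + 2 := hS.2
        have h2 : S.card ≤ p + 1 := le_trans (Finset.card_le_univ S) (by simp)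
        omega
      · intro c
        exact (c 0).elim0
    | succ k ihk =>
      obtain ⟨VY, fY, GY, hYfree, hYarr⟩ := ihp (k + 1)
      obtain ⟨VC, fC, GC, hCfree, hCarr⟩ := ihk
      letI := fY
      letI := fC
      letI := Classical.decEq VC
      set r := (k + 1) * (Fintype.card VC - 1) + 1 with hrdef
      letI : DecidablePred (fun f : VC → Fin r => Function.Injective f) :=
        fun _ => Classical.dec _
      exact ⟨KerV r VY VC, inferInstance, Ker r GY GC, ker_cliqueFree hYfree hCfree,
        ker_arrow (by rw [hrdef]; exact Nat.lt_succ_self _) hYarr hCarr⟩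

lemma list_sum_fin (l : List ℕ) (f : ℕ → ℕ) :
    ∑ i : Fin l.length, f (l.get i) = (l.map f).sum := by
  induction l with
  | nil => simp
  | cons x xs ih =>
    rw [List.map_cons, List.sum_cons, ← ih]
    exact Fin.sum_univ_succ (f := fun i : Fin (xs.length + 1) => f ((x :: xs).get i))

lemma kernel_VArrowsUni (m₀ p : ℕ) (h₀ : 0 < m₀) (hp : 0 < p) {V : Type} [Fintype V]
    {G : SimpleGraph V}
    (harr : ∀ c : V → Fin m₀, ∃ S : Finset V,
      G.IsNClique (min m₀ p) S ∧ ∀ v ∈ S, ∀ w ∈ S, c v = c w) :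
    VArrowsUni m₀ p G := by
  classical
  intro a hne hpos hsum hle c
  by_cases h1 : ∃ v : V, a.get (c v) = 1
  · obtain ⟨v, hv⟩ := h1
    refine ⟨c v, {v}, by simp, ?_⟩
    rw [hv]
    exact ⟨by simp, by simp⟩
  · push_neg at h1
    have hbig : ∀ v : V, 2 ≤ a.get (c v) := by
      intro v
      have h2 : 0 < a.get (c v) := hpos _ (a.get_mem (c v))
      have h3 := h1 v
      omega
    set Big : Finset (Fin a.length) := Finset.univ.filter (fun i => 2 ≤ a.get i) with hBigdef
    have hbc : Big.card ≤ ∑ i : Fin a.length, (a.get i - 1) := by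
      calc Big.card = ∑ _i ∈ Big, 1 := by simp
        _ ≤ ∑ i ∈ Big, (a.get i - 1) := Finset.sum_le_sum (fun i hi => by
            have h4 := (Finset.mem_filter.mp hi).2
            omega)
        _ ≤ ∑ i ∈ Finset.univ, (a.get i - 1) :=
            Finset.sum_le_sum_of_subset (Finset.filter_subset _ _)
    have hbc2 : Big.card ≤ (a.map (fun x => x - 1)).sum :=
      le_trans hbc (le_of_eq (list_sum_fin a (fun x => x - 1)))
    have hlt : Big.card < m₀ := by omega
    set e1 := Big.orderIsoOfFin rfl with he1
    have hmem : ∀ v : V, c v ∈ Big := fun v =>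
      Finset.mem_filter.mpr ⟨Finset.mem_univ _, hbig v⟩
    set ct : V → Fin m₀ :=
      fun v => Fin.castLE (le_of_lt hlt) (e1.symm ⟨c v, hmem v⟩) with hct
    obtain ⟨S, hSclq, hSmono⟩ := harr ct
    have hScard : S.card = min m₀ p := hSclq.2
    have hSne : S.Nonempty := Finset.card_pos.mp (by
      rw [hScard]
      exact lt_min h₀ hp)
    obtain ⟨v₀, hv₀⟩ := hSne
    have hmonoc : ∀ v ∈ S, c v = c v₀ := by
      intro v hv
      have h5 : ct v = ct v₀ := hSmono v hv v₀ hv₀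
      simp only [hct] at h5
      have h6 : (e1.symm ⟨c v, hmem v⟩ : Fin Big.card) = e1.symm ⟨c v₀, hmem v₀⟩ :=
        Fin.castLE_injective _ h5
      have h7 := e1.symm.injective h6
      exact Subtype.ext_iff.mp h7
    have hgle : a.get (c v₀) ≤ min m₀ p := by
      refine le_min ?_ (hle _ (a.get_mem (c v₀)))
      have h8 : a.get (c v₀) - 1 ≤ ∑ i : Fin a.length, (a.get i - 1) :=
        Finset.single_le_sum (f := fun i => a.get i - 1)
          (fun _ _ => Nat.zero_le _) (Finset.mem_univ (c v₀))
      have h8' : a.get (c v₀) - 1 ≤ (a.map (fun x => x - 1)).sum :=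
        le_trans h8 (le_of_eq (list_sum_fin a (fun x => x - 1)))
      have h9 := hbig v₀
      omega
    obtain ⟨S', hS'sub, hS'card⟩ := Finset.exists_subset_card_eq
      (show a.get (c v₀) ≤ S.card by rw [hScard]; exact hgle)
    exact ⟨c v₀, S', fun v hv => hmonoc v (hS'sub hv),
      ⟨hSclq.1.subset (Finset.coe_subset.mpr hS'sub), hS'card⟩⟩

lemma list_sum_set (l : List ℕ) (n : ℕ) (x : ℕ) (h : n < l.length) :
    (l.set n x).sum + l[n] = l.sum + x := by
  induction l generalizing n with
  | nil => simp at h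
  | cons y ys ih =>
    cases n with
    | zero => simp [List.set]; omega
    | succ n =>
      have hn : n < ys.length := by simpa using h
      have hih := ih n hn
      simp only [List.set, List.sum_cons, List.getElem_cons_succ]
      omega

def coneG {V : Type} (G : SimpleGraph V) : SimpleGraph (Option V) where
  Adj x y := match x, y with
    | none, none => False
    | none, some _ => True
    | some _, none => True
    | some u, some v => G.Adj u v
  symm := by
    constructor
    rintro (_ | u) (_ | v) h
    · exact h
    · trivial
    · trivial
    · exact G.adj_symm h
  loopless := by
    constructor
    rintro (_ | u) h
    · exact h
    · exact G.loopless.irrefl u h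

@[simp] lemma cone_adj_none_some {V : Type} {G : SimpleGraph V} {v : V} :
    (coneG G).Adj none (some v) ↔ True := Iff.rfl

@[simp] lemma cone_adj_some_none {V : Type} {G : SimpleGraph V} {v : V} :
    (coneG G).Adj (some v) none ↔ True := Iff.rfl

@[simp] lemma cone_adj_some_some {V : Type} {G : SimpleGraph V} {u v : V} :
    (coneG G).Adj (some u) (some v) ↔ G.Adj u v := Iff.rfl

lemma cone_VArrowsUni {V : Type} [Fintype V] {G : SimpleGraph V} {m p : ℕ}
    (hG : VArrowsUni m p G) : VArrowsUni (m + 1) p (coneG G) := by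
  classical
  intro a hne hpos hsum hle c
  set j := c none with hjdef
  by_cases hj1 : a.get j = 1
  · refine ⟨j, {none}, by simp [hjdef], ?_⟩
    rw [hj1]
    exact ⟨by simp, by simp⟩
  · have hj2 : 2 ≤ a.get j := by
      have h2 : 0 < a.get j := hpos _ (a.get_mem j)
      omega
    have hlen : (a.set (↑j) (a.get j - 1)).length = a.length := List.length_set
    have hjlt : (j : ℕ) < a.length := j.2
    have hne' : a.set (↑j) (a.get j - 1) ≠ [] := by
      intro h
      have h0 : (a.set (↑j) (a.get j - 1)).length = 0 := by rw [h]; rfl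
      rw [hlen] at h0
      exact hne (List.length_eq_zero_iff.mp h0)
    have hpos' : ∀ x ∈ a.set (↑j) (a.get j - 1), 0 < x := by
      intro x hx
      rcases List.mem_or_eq_of_mem_set hx with hx' | rfl
      · exact hpos _ hx'
      · omega
    have hle' : ∀ x ∈ a.set (↑j) (a.get j - 1), x ≤ p := by
      intro x hx
      rcases List.mem_or_eq_of_mem_set hx with hx' | rfl
      · exact hle _ hx'
      · have hh : a.get j ≤ p := hle _ (a.get_mem j)
        omega
    have hsum' : ((a.set (↑j) (a.get j - 1)).map (· - 1)).sum + 1 = m := by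
      rw [List.map_set]
      have hjlt' : (j : ℕ) < (a.map (fun x => x - 1)).length := by
        rw [List.length_map]; exact hjlt
      have hkey := list_sum_set (a.map (fun x => x - 1)) j (a.get j - 1 - 1) hjlt'
      have hget : (a.map (fun x => x - 1))[(j : ℕ)] = a.get j - 1 := by
        rw [List.getElem_map]
        rfl
      rw [hget] at hkey
      omega
    have harr := hG _ hne' hpos' hsum' hle'
    set c' : V → Fin (a.set (↑j) (a.get j - 1)).length :=
      fun v => Fin.cast hlen.symm (c (some v)) with hc'
    obtain ⟨i', S', hmono', hclq'⟩ := harr c'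
    have hi'lt : (i' : ℕ) < a.length := by
      have h3 := i'.2
      omega
    have hgetset : (a.set (↑j) (a.get j - 1)).get i' =
        if (j : ℕ) = (i' : ℕ) then a.get j - 1 else a[(i' : ℕ)]'hi'lt := by
      rw [List.get_eq_getElem, List.getElem_set]
    by_cases hij : (i' : ℕ) = (j : ℕ)
    · have hget' : (a.set (↑j) (a.get j - 1)).get i' = a.get j - 1 := by
        rw [hgetset, if_pos hij.symm]
      refine ⟨j, insert none (S'.image some), ?_, ?_⟩
      · intro v hv
        rcases Finset.mem_insert.mp hv with rfl | hv'
        · exact hjdef.symm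
        · obtain ⟨u, hu, rfl⟩ := Finset.mem_image.mp hv'
          have h5 : c' u = i' := hmono' u hu
          apply Fin.ext
          have h6 : ((c (some u)) : ℕ) = (i' : ℕ) := congrArg Fin.val h5
          rw [h6, hij]
      · constructor
        · intro x hx y hy hxy
          simp only [Finset.coe_insert, Set.mem_insert_iff, Finset.coe_image,
            Set.mem_image, Finset.mem_coe] at hx hy
          rcases hx with rfl | ⟨u1, hu1, rfl⟩
          · rcases hy with rfl | ⟨u2, hu2, rfl⟩
            · exact absurd rfl hxy
            · trivial
          · rcases hy with rfl | ⟨u2, hu2, rfl⟩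
            · trivial
            · have h7 : u1 ≠ u2 := fun h => hxy (by rw [h])
              exact hclq'.1 hu1 hu2 h7
        · rw [Finset.card_insert_of_notMem (by simp),
            Finset.card_image_of_injective _ (Option.some_injective V), hclq'.2, hget']
          omega
    · have hget' : (a.set (↑j) (a.get j - 1)).get i' = a[(i' : ℕ)]'hi'lt := by
        rw [hgetset, if_neg (fun h => hij h.symm)]
      refine ⟨⟨(i' : ℕ), hi'lt⟩, S'.image some, ?_, ?_⟩
      · intro v hv
        obtain ⟨u, hu, rfl⟩ := Finset.mem_image.mp hv
        have h5 : c' u = i' := hmono' u hu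
        have h6 : ((c (some u)) : ℕ) = (i' : ℕ) := congrArg Fin.val h5
        exact Fin.ext h6
      · constructor
        · intro x hx y hy hxy
          simp only [Finset.coe_image, Set.mem_image, Finset.mem_coe] at hx hy
          obtain ⟨u1, hu1, rfl⟩ := hx
          obtain ⟨u2, hu2, rfl⟩ := hy
          have h7 : u1 ≠ u2 := fun h => hxy (by rw [h])
          exact hclq'.1 hu1 hu2 h7
        · rw [Finset.card_image_of_injective _ (Option.some_injective V), hclq'.2, hget']
          rfl

lemma cone_cliqueFree {V : Type} {G : SimpleGraph V} {q : ℕ}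
    (hG : G.CliqueFree q) : (coneG G).CliqueFree (q + 1) := by
  classical
  intro S hS
  rcases Nat.eq_zero_or_pos q with rfl | hq
  · exact hG ∅ ⟨by simp, by simp⟩
  by_cases hmem : none ∈ S
  · set S' := S.erase none with hS'
    have hcard' : S'.card = q := by
      rw [hS', Finset.card_erase_of_mem hmem, hS.2]
      omega
    have hall : ∀ x ∈ S', ∃ u, x = some u := by
      intro x hx
      rcases x with _ | u
      · exact absurd rfl (Finset.ne_of_mem_erase hx)
      · exact ⟨u, rfl⟩
    have hne' : S'.Nonempty := Finset.card_pos.mp (by omega)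
    obtain ⟨x₀, hx₀⟩ := hne'
    obtain ⟨u₀, rfl⟩ := hall x₀ hx₀
    set proj : Option V → V := fun x => x.getD u₀ with hproj
    have hinj : Set.InjOn proj (S' : Set (Option V)) := by
      intro x hx y hy hxy
      obtain ⟨u, rfl⟩ := hall x (Finset.mem_coe.mp hx)
      obtain ⟨u', rfl⟩ := hall y (Finset.mem_coe.mp hy)
      simp only [hproj, Option.getD_some] at hxy
      rw [hxy]
    have himg : G.IsClique ((S'.image proj : Finset V) : Set V) := by
      intro x hx y hy hxy
      simp only [Finset.coe_image, Set.mem_image, Finset.mem_coe] at hx hy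
      obtain ⟨b1, hb1, rfl⟩ := hx
      obtain ⟨b2, hb2, rfl⟩ := hy
      obtain ⟨u, rfl⟩ := hall b1 hb1
      obtain ⟨u', rfl⟩ := hall b2 hb2
      have hne2 : (some u : Option V) ≠ some u' := by
        intro h
        exact hxy (by rw [h])
      have hadj := hS.1 (Finset.mem_coe.mpr (Finset.mem_of_mem_erase hb1))
        (Finset.mem_coe.mpr (Finset.mem_of_mem_erase hb2)) hne2
      exact hadj
    have hlt := clique_card_lt hG himg
    rw [Finset.card_image_of_injOn hinj, hcard'] at hlt
    exact lt_irrefl _ hlt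
  · have hall : ∀ x ∈ S, ∃ u, x = some u := by
      intro x hx
      rcases x with _ | u
      · exact absurd hx hmem
      · exact ⟨u, rfl⟩
    have hne' : S.Nonempty := Finset.card_pos.mp (by rw [hS.2]; omega)
    obtain ⟨x₀, hx₀⟩ := hne'
    obtain ⟨u₀, rfl⟩ := hall x₀ hx₀
    set proj : Option V → V := fun x => x.getD u₀ with hproj
    have hinj : Set.InjOn proj (S : Set (Option V)) := by
      intro x hx y hy hxy
      obtain ⟨u, rfl⟩ := hall x (Finset.mem_coe.mp hx)
      obtain ⟨u', rfl⟩ := hall y (Finset.mem_coe.mp hy)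
      simp only [hproj, Option.getD_some] at hxy
      rw [hxy]
    have himg : G.IsClique ((S.image proj : Finset V) : Set V) := by
      intro x hx y hy hxy
      simp only [Finset.coe_image, Set.mem_image, Finset.mem_coe] at hx hy
      obtain ⟨b1, hb1, rfl⟩ := hx
      obtain ⟨b2, hb2, rfl⟩ := hy
      obtain ⟨u, rfl⟩ := hall b1 hb1
      obtain ⟨u', rfl⟩ := hall b2 hb2
      have hne2 : (some u : Option V) ≠ some u' := by
        intro h
        exact hxy (by rw [h])
      exact hS.1 (Finset.mem_coe.mpr hb1) (Finset.mem_coe.mpr hb2) hne2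
    have hlt := clique_card_lt hG himg
    rw [Finset.card_image_of_injOn hinj, hS.2] at hlt
    omega

lemma transfer_equiv {V W : Type} [Fintype V] [Fintype W] (e : V ≃ W) (G : SimpleGraph V)
    (m p q : ℕ) (hA : VArrowsUni m p G) (hC : G.CliqueFree q) :
    ∃ G' : SimpleGraph W, VArrowsUni m p G' ∧ G'.CliqueFree q := by
  classical
  refine ⟨G.comap e.symm, ?_, ?_⟩
  · intro a hne hpos hsum hle c
    obtain ⟨i, S, hmono, hclq⟩ := hA a hne hpos hsum hle (fun v => c (e v))
    refine ⟨i, S.image e, ?_, ?_, ?_⟩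
    · intro w hw
      obtain ⟨v, hv, rfl⟩ := Finset.mem_image.mp hw
      exact hmono v hv
    · intro x hx y hy hxy
      simp only [Finset.coe_image, Set.mem_image, Finset.mem_coe] at hx hy
      obtain ⟨v1, hv1, rfl⟩ := hx
      obtain ⟨v2, hv2, rfl⟩ := hy
      have h7 : v1 ≠ v2 := fun h => hxy (by rw [h])
      have hadj := hclq.1 hv1 hv2 h7
      show G.Adj (e.symm (e v1)) (e.symm (e v2))
      simpa using hadj
    · rw [Finset.card_image_of_injective _ e.injective, hclq.2]
  · intro S hS
    have himg : G.IsClique ((S.image e.symm : Finset V) : Set V) := by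
      intro x hx y hy hxy
      simp only [Finset.coe_image, Set.mem_image, Finset.mem_coe] at hx hy
      obtain ⟨w1, hw1, rfl⟩ := hx
      obtain ⟨w2, hw2, rfl⟩ := hy
      have h7 : w1 ≠ w2 := fun h => hxy (by rw [h])
      exact hS.1 hw1 hw2 h7
    have hlt := clique_card_lt hC himg
    rw [Finset.card_image_of_injective _ e.symm.injective, hS.2] at hlt
    exact lt_irrefl _ hlt


lemma iter_cone (n₀ m₀ p q : ℕ) (G₀ : SimpleGraph (Fin n₀)) (h1 : VArrowsUni m₀ p G₀)
    (h2 : G₀.CliqueFree q) (t : ℕ) :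
    ∃ (W : Type) (_ : Fintype W) (H : SimpleGraph W),
      Fintype.card W = n₀ + t ∧ VArrowsUni (m₀ + t) p H ∧ H.CliqueFree (q + t) := by
  induction t with
  | zero => exact ⟨Fin n₀, inferInstance, G₀, by simp, h1, h2⟩
  | succ t ih =>
    obtain ⟨W, fW, H, hcard, hA, hC⟩ := ih
    letI := fW
    refine ⟨Option W, inferInstance, coneG H, ?_, ?_, ?_⟩
    · simp [hcard]; omega
    · exact cone_VArrowsUni hA
    · exact cone_cliqueFree hC


theorem Fvt_subadd (m m₀ p q : ℕ) (h₀ : 0 < m₀) (hp : 0 < p) (hq : 0 < q)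
    (hm : m₀ ≤ m) (hq' : min m₀ p < q) :
    Fvt m p (m - m₀ + q) ≤ Fvt m₀ p q + (m - m₀) := by
  classical
  obtain ⟨V0, fV0, G0, hfree0, harr0⟩ := kernel_exists (min m₀ p) m₀
  letI := fV0
  have harrU : VArrowsUni m₀ p G0 := kernel_VArrowsUni m₀ p h₀ hp harr0
  have hfreeq : G0.CliqueFree q := hfree0.mono (by omega)
  obtain ⟨G0', hA0, hC0⟩ := transfer_equiv (Fintype.equivFin V0) G0 m₀ p q harrU hfreeq
  have hne : {n : ℕ | ∃ G : SimpleGraph (Fin n), VArrowsUni m₀ p G ∧ G.CliqueFree q}.Nonempty :=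
    ⟨Fintype.card V0, G0', hA0, hC0⟩
  have hmemInf : Fvt m₀ p q ∈
      {n : ℕ | ∃ G : SimpleGraph (Fin n), VArrowsUni m₀ p G ∧ G.CliqueFree q} := by
    unfold Fvt
    exact Nat.sInf_mem hne
  obtain ⟨G₁, hG₁A, hG₁C⟩ := hmemInf
  obtain ⟨W, fW, H, hcard, hA, hC⟩ := iter_cone (Fvt m₀ p q) m₀ p q G₁ hG₁A hG₁C (m - m₀)
  letI := fW
  have e2 : W ≃ Fin (Fvt m₀ p q + (m - m₀)) := (Fintype.equivFin W).trans (finCongr hcard)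
  have hA' : VArrowsUni m p H := by
    rwa [Nat.add_sub_cancel' hm] at hA
  have hC' : H.CliqueFree (m - m₀ + q) := by
    rwa [Nat.add_comm] at hC
  obtain ⟨H', hA'', hC''⟩ := transfer_equiv e2 H m p (m - m₀ + q) hA' hC'
  have hmem : (Fvt m₀ p q + (m - m₀)) ∈
      {n : ℕ | ∃ G : SimpleGraph (Fin n), VArrowsUni m p G ∧ G.CliqueFree (m - m₀ + q)} :=
    ⟨H', hA'', hC''⟩
  show Fvt m p (m - m₀ + q) ≤ Fvt m₀ p q + (m - m₀)
  unfold Fvt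
  exact Nat.sInf_le hmem
end
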